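/- arXiv:2507.04516 — 4 statements merged into one kernel-verified Lean document; each statement's English description precedes it below -/
import Mathlib

section
/- (Vizing Adjacency Lemma.) Let D be a positive integer and let G be a simple graph with Δ(G) ≤ D. Let e = xy be an edge such that x has at most D − d(y) + [d(y)=D] neighbors of degree D (where [P] is 1 if P holds and 0 otherwise). Then any partial D-edge-coloring of G in which e is uncolored can be extended to a partial D-edge-coloring whose set of colored edges is the original colored set together with e. -/
open SimpleGraph

open scoped Classical in
/-- `π` is a proper partial `D`-edge-coloring of `G`: it assigns `none` outside the edge set,
and distinct incident edges receive different colors. -/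
def IsProperPEC {V : Type} (G : SimpleGraph V) (D : ℕ) (π : Sym2 V → Option (Fin D)) : Prop :=
  (∀ e, π e ≠ none → e ∈ G.edgeSet) ∧
    ∀ e₁ e₂ : Sym2 V, e₁ ≠ e₂ → (∃ v, v ∈ e₁ ∧ v ∈ e₂) → π e₁ ≠ none → π e₁ ≠ π e₂

/-- Number of neighbors of `x` having degree `8`. -/
def deg8Nbrs {V : Type} [Fintype V] [DecidableEq V] (G : SimpleGraph V) [DecidableRel G.Adj]
    (x : V) : ℕ :=
  ((G.neighborFinset x).filter (fun w => G.degree w = 8)).card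

/-- The edge `xy` is `x`-weak. -/
def IsXWeak {V : Type} [Fintype V] [DecidableEq V] (G : SimpleGraph V) [DecidableRel G.Adj]
    (x y : V) : Prop :=
  deg8Nbrs G x ≤ 8 - G.degree y + (if G.degree y = 8 then 1 else 0)

/-- The edge `e` is weak: `e = xy` with `xy` `x`-weak or `y`-weak. -/
def IsWeakEdge {V : Type} [Fintype V] [DecidableEq V] (G : SimpleGraph V) [DecidableRel G.Adj]
    (e : Sym2 V) : Prop :=
  ∃ x y : V, e = s(x, y) ∧ G.Adj x y ∧ (IsXWeak G x y ∨ IsXWeak G y x)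

/-- A butterfly of the first kind with the given vertices. -/
def IsButterflyB1 {V : Type} [Fintype V] [DecidableEq V] (G : SimpleGraph V) [DecidableRel G.Adj]
    (x y z v₁ v₂ v₃ : V) : Prop :=
  List.Pairwise (· ≠ ·) [x, y, z, v₁, v₂, v₃] ∧
  G.Adj x y ∧ G.Adj x z ∧ G.Adj y v₁ ∧ G.Adj y v₃ ∧ G.Adj z v₁ ∧ G.Adj z v₂ ∧
  G.Adj x v₁ ∧ G.Adj x v₂ ∧ G.Adj x v₃ ∧
  G.degree y = 3 ∧ G.degree z = 3 ∧ G.degree x = 8 ∧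
  G.degree v₁ = 8 ∧ G.degree v₂ = 8 ∧ G.degree v₃ = 8

/-- A butterfly of the second kind with the given vertices. -/
def IsButterflyB2 {V : Type} [Fintype V] [DecidableEq V] (G : SimpleGraph V) [DecidableRel G.Adj]
    (x y z v₁ v₂ v₃ v₄ : V) : Prop :=
  List.Pairwise (· ≠ ·) [x, y, z, v₁, v₂, v₃, v₄] ∧
  G.Adj x y ∧ G.Adj x z ∧ G.Adj y v₁ ∧ G.Adj y v₄ ∧ G.Adj z v₂ ∧ G.Adj z v₃ ∧
  G.Adj x v₁ ∧ G.Adj x v₂ ∧ G.Adj x v₃ ∧ G.Adj x v₄ ∧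
  G.degree y = 3 ∧ G.degree z = 3 ∧ G.degree x = 8 ∧
  G.degree v₁ = 8 ∧ G.degree v₂ = 8 ∧ G.degree v₃ = 8 ∧ G.degree v₄ = 8

/-- The pair `(x, y)` is the distinguished edge `xy` of some butterfly of `G`. -/
def IsButterflyLikeAt {V : Type} [Fintype V] [DecidableEq V] (G : SimpleGraph V)
    [DecidableRel G.Adj] (x y : V) : Prop :=
  (∃ z v₁ v₂ v₃, IsButterflyB1 G x y z v₁ v₂ v₃) ∨
  (∃ z v₁ v₂ v₃ v₄, IsButterflyB2 G x y z v₁ v₂ v₃ v₄)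

/-- The edge `e` is butterfly-like. -/
def IsButterflyLike {V : Type} [Fintype V] [DecidableEq V] (G : SimpleGraph V)
    [DecidableRel G.Adj] (e : Sym2 V) : Prop :=
  ∃ x y : V, e = s(x, y) ∧ IsButterflyLikeAt G x y

/-- An edge is reducible when it is weak or butterfly-like. -/
def IsReducible {V : Type} [Fintype V] [DecidableEq V] (G : SimpleGraph V) [DecidableRel G.Adj]
    (e : Sym2 V) : Prop :=
  IsWeakEdge G e ∨ IsButterflyLike G e

/-- Reversal of darts, as a permutation. -/
def dartRev {V : Type} (G : SimpleGraph V) : Equiv.Perm G.Dart :=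
  ⟨SimpleGraph.Dart.symm, SimpleGraph.Dart.symm,
    fun d => SimpleGraph.Dart.symm_symm d, fun d => SimpleGraph.Dart.symm_symm d⟩

/-- `ρ` is a rotation system of `G`: it permutes the darts around each vertex
in a single cycle. -/
def IsRotationSystem {V : Type} (G : SimpleGraph V) (ρ : Equiv.Perm G.Dart) : Prop :=
  (∀ d : G.Dart, (ρ d).fst = d.fst) ∧
    ∀ d d' : G.Dart, d.fst = d'.fst → ρ.SameCycle d d'

/-- The face permutation of a rotation system. -/
def facePerm {V : Type} (G : SimpleGraph V) (ρ : Equiv.Perm G.Dart) : Equiv.Perm G.Dart :=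
  (dartRev G).trans ρ

/-- The setoid of darts whose classes are the faces of a combinatorial embedding. -/
def faceSetoid {V : Type} (G : SimpleGraph V) (ρ : Equiv.Perm G.Dart) : Setoid G.Dart :=
  ⟨(facePerm G ρ).SameCycle, Equiv.Perm.SameCycle.equivalence _⟩

/-- The number of faces of a combinatorial embedding. -/
noncomputable def numFaces {V : Type} (G : SimpleGraph V) (ρ : Equiv.Perm G.Dart) : ℕ :=
  Nat.card (Quotient (faceSetoid G ρ))

/-- The number of isolated vertices of `G`. -/
noncomputable def numIsolated {V : Type} (G : SimpleGraph V) : ℕ :=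
  Nat.card {v : V // ∀ w, ¬ G.Adj v w}

/-- The number of connected components of `G`. -/
noncomputable def numComponents {V : Type} (G : SimpleGraph V) : ℕ :=
  Nat.card G.ConnectedComponent

/-- `G` is embeddable in an orientable surface of genus at most `g`: it has a combinatorial
embedding (rotation system) whose Euler characteristic, summed over components, is at least
`2 * (number of components) - 2 * g`. -/
def GenusLE {V : Type} (G : SimpleGraph V) (g : ℕ) : Prop :=
  ∃ ρ : Equiv.Perm G.Dart, IsRotationSystem G ρ ∧
    2 * (numComponents G : ℤ) - 2 * (g : ℤ) ≤
      (Nat.card V : ℤ) - (Nat.card G.edgeSet : ℤ) + ((numFaces G ρ + numIsolated G : ℕ) : ℤ)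

/-- `G` is planar: it is embeddable in an orientable surface of genus `0`, i.e. the sphere. -/
def IsPlanar {V : Type} (G : SimpleGraph V) : Prop := GenusLE G 0

/-- Color `c` is free at `v` (no colored edge incident to `v` has color `c`). -/
def freeAt {V : Type} {D : ℕ} (π : Sym2 V → Option (Fin D)) (v : V) (c : Fin D) : Prop :=
  ∀ e : Sym2 V, v ∈ e → π e ≠ some c

/-- The graph formed by the edges colored `a` or `b`; its components are the `(a,b)`-chains. -/
def chainGraph {V : Type} {D : ℕ} (π : Sym2 V → Option (Fin D)) (a b : Fin D) : SimpleGraph V :=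
  SimpleGraph.fromEdgeSet {e | π e = some a ∨ π e = some b}

/-- `u` and `v` lie on the same `(a,b)`-chain. -/
def chainReach {V : Type} {D : ℕ} (π : Sym2 V → Option (Fin D)) (a b : Fin D) (u v : V) : Prop :=
  (chainGraph π a b).Reachable u v

/-- `v` is an endpoint of its `(a,b)`-chain (it has at most one neighbor on the chain). -/
def chainEndpoint {V : Type} {D : ℕ} (π : Sym2 V → Option (Fin D)) (a b : Fin D) (v : V) : Prop :=
  ((chainGraph π a b).neighborSet v).Subsingleton

/-- There is an `(a,b)`-chain with endpoints `u` and `v`. -/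
def chainPathEndpoints {V : Type} {D : ℕ} (π : Sym2 V → Option (Fin D)) (a b : Fin D)
    (u v : V) : Prop :=
  u ≠ v ∧ chainReach π a b u v ∧ chainEndpoint π a b u ∧ chainEndpoint π a b v

/-- The `(a,b)`-chain containing `x` is a cycle (no vertex of it is an endpoint). -/
def inChainCycle {V : Type} {D : ℕ} (π : Sym2 V → Option (Fin D)) (a b : Fin D) (x : V) : Prop :=
  ∀ v, chainReach π a b x v → ¬ chainEndpoint π a b v

/-- The vertex `w` is at distance at most `k` from the edge `e`. -/
def vtxEdgeDistLE {V : Type} (G : SimpleGraph V) (k : ℕ) (w : V) (e : Sym2 V) : Prop :=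
  ∃ u, u ∈ e ∧ ∃ p : G.Walk w u, p.length ≤ k

/-- The edges `e₁` and `e₂` are at distance at most `k` from each other. -/
def edgeDistLE {V : Type} (G : SimpleGraph V) (k : ℕ) (e₁ e₂ : Sym2 V) : Prop :=
  ∃ u, u ∈ e₁ ∧ vtxEdgeDistLE G k u e₂

/-- The uncolored edge `xy` has type 0: `π` can be turned into a coloring additionally coloring
`xy` by recoloring only edges at distance at most 1 from `xy`. -/
def HasType0 {V : Type} (G : SimpleGraph V) (π : Sym2 V → Option (Fin 8)) (x y : V) : Prop :=
  ∃ σ : Sym2 V → Option (Fin 8), IsProperPEC G 8 σ ∧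
    (∀ e, σ e ≠ none ↔ (π e ≠ none ∨ e = s(x, y))) ∧
    (∀ e, ¬ edgeDistLE G 1 e s(x, y) → σ e = π e)

/-- The uncolored edge `xy` has type `1_{ab}`. -/
def HasType1 {V : Type} (π : Sym2 V → Option (Fin 8)) (x y : V) (a b : Fin 8) : Prop :=
  freeAt π x a ∧ freeAt π y b ∧ ¬ (chainReach π a b x y ∧ chainEndpoint π a b x)

/-- The uncolored edge `xy` has type `2_{ab}`. -/
def HasType2 {V : Type} (G : SimpleGraph V) (π : Sym2 V → Option (Fin 8)) (x y : V)
    (a b : Fin 8) : Prop :=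
  freeAt π y a ∧ freeAt π y b ∧
  ∃ c : Fin 8, c ≠ b ∧ freeAt π x c ∧
    ∃ z : V, G.Adj x z ∧ G.Adj y z ∧ π s(y, z) = some c ∧ π s(x, z) = some a ∧
      ¬ inChainCycle π a b x

/-- The uncolored edge `xy` has type `3_{ab}`. -/
def HasType3 {V : Type} (G : SimpleGraph V) (π : Sym2 V → Option (Fin 8)) (x y : V)
    (a b : Fin 8) : Prop :=
  freeAt π x a ∧ freeAt π y b ∧ chainPathEndpoints π a b x y ∧
  ∃ c : Fin 8, c ≠ b ∧ freeAt π y c ∧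
    ∃ z : V, G.Adj x z ∧ freeAt π z b ∧ π s(x, z) = some c

/-- The uncolored edge `xy` has type `4_{ab}`. -/
def HasType4 {V : Type} (G : SimpleGraph V) (π : Sym2 V → Option (Fin 8)) (x y : V)
    (a b : Fin 8) : Prop :=
  freeAt π y a ∧ freeAt π y b ∧ inChainCycle π a b x ∧
  ∃ c : Fin 8, freeAt π x c ∧
    ∃ z v : V, z ≠ v ∧ z ≠ x ∧ z ≠ y ∧ v ≠ x ∧ v ≠ y ∧
      G.Adj x v ∧ G.Adj z v ∧ π s(x, v) = some a ∧ π s(z, v) = some c ∧ freeAt π z b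

/-- The uncolored edge `xy` has type `5_{ab}`. -/
def HasType5 {V : Type} (G : SimpleGraph V) (π : Sym2 V → Option (Fin 8)) (x y : V)
    (a b : Fin 8) : Prop :=
  freeAt π y a ∧ freeAt π x b ∧ chainPathEndpoints π a b x y ∧
  ∃ c : Fin 8, c ≠ a ∧ freeAt π y c ∧
    ∃ z v : V, z ≠ v ∧ z ≠ x ∧ z ≠ y ∧ v ≠ x ∧ v ≠ y ∧
      G.Adj x v ∧ G.Adj z v ∧ π s(x, v) = some c ∧ π s(z, v) = some a ∧
      freeAt π z b ∧ freeAt π z c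

/-- The uncolored edge `xy` has type `6_{abcd}`. -/
def HasType6 {V : Type} (G : SimpleGraph V) (π : Sym2 V → Option (Fin 8)) (x y : V)
    (a b c d : Fin 8) : Prop :=
  freeAt π y a ∧ freeAt π y c ∧ freeAt π y d ∧ freeAt π x b ∧
  chainPathEndpoints π a b x y ∧ inChainCycle π c d x ∧
  ∃ z v₁ v₂ : V, z ≠ v₁ ∧ z ≠ v₂ ∧ v₁ ≠ v₂ ∧ z ≠ x ∧ z ≠ y ∧ v₁ ≠ x ∧ v₁ ≠ y ∧ v₂ ≠ x ∧ v₂ ≠ y ∧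
    G.Adj x v₁ ∧ G.Adj x v₂ ∧ G.Adj z v₁ ∧ G.Adj z v₂ ∧
    π s(x, v₁) = some c ∧ π s(x, v₂) = some a ∧ π s(z, v₁) = some a ∧ π s(z, v₂) = some c ∧
    freeAt π z b ∧ freeAt π z d

namespace VALaux
set_option linter.unusedSectionVars false

open scoped Classical

variable {V : Type} [Fintype V] [DecidableEq V] {D : ℕ} {G : SimpleGraph V} {x y : V}

section Basic

variable {π : Sym2 V → Option (Fin D)}

theorem eq_of_color (hπ : IsProperPEC G D π) {e₁ e₂ : Sym2 V} {t : V} {c : Fin D}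
    (ht₁ : t ∈ e₁) (ht₂ : t ∈ e₂) (h₁ : π e₁ = some c) (h₂ : π e₂ = some c) : e₁ = e₂ := by
  by_contra hne
  exact hπ.2 e₁ e₂ hne ⟨t, ht₁, ht₂⟩ (by simp [h₁]) (h₁.trans h₂.symm)

theorem adj_of_colored (hπ : IsProperPEC G D π) {u v : V} {c : Fin D}
    (h : π s(u, v) = some c) : G.Adj u v :=
  G.mem_edgeSet.1 (hπ.1 _ (by simp [h]))

/-- Update a coloring at one edge. -/
def upd (π : Sym2 V → Option (Fin D)) (e₀ : Sym2 V) (c : Option (Fin D)) :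
    Sym2 V → Option (Fin D) :=
  fun e => if e = e₀ then c else π e

theorem upd_same {e₀ : Sym2 V} {c : Option (Fin D)} : upd π e₀ c e₀ = c := by simp [upd]

theorem upd_ne {e₀ e : Sym2 V} {c : Option (Fin D)} (h : e ≠ e₀) : upd π e₀ c e = π e := by
  simp [upd, h]

theorem freeAt_upd {e₀ : Sym2 V} {c : Option (Fin D)} {v : V} {b : Fin D} (h : v ∉ e₀) :
    freeAt (upd π e₀ c) v b ↔ freeAt π v b := by
  constructor <;> intro H e he
  · have hne : e ≠ e₀ := by rintro rfl; exact h he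
    have := H e he
    rwa [upd_ne hne] at this
  · have hne : e ≠ e₀ := by rintro rfl; exact h he
    rw [upd_ne hne]
    exact H e he

theorem upd_proper (hπ : IsProperPEC G D π) {u v : V} {γ : Fin D}
    (he : s(u, v) ∈ G.edgeSet) (hu : freeAt π u γ) (hv : freeAt π v γ) :
    IsProperPEC G D (upd π s(u, v) (some γ)) := by
  constructor
  · intro e h
    by_cases h' : e = s(u, v)
    · exact h' ▸ he
    · exact hπ.1 e (by rwa [upd_ne h'] at h)
  · rintro e₁ e₂ hne ⟨t, ht₁, ht₂⟩ h1
    by_cases h₁ : e₁ = s(u, v) <;> by_cases h₂ : e₂ = s(u, v)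
    · exact absurd (h₁.trans h₂.symm) hne
    · subst h₁
      rw [upd_same, upd_ne h₂]
      have hfree : freeAt π t γ := by
        rcases Sym2.mem_iff.1 ht₁ with rfl | rfl
        · exact hu
        · exact hv
      exact fun h => (hfree e₂ ht₂ h.symm)
    · subst h₂
      rw [upd_ne h₁, upd_same]
      have hfree : freeAt π t γ := by
        rcases Sym2.mem_iff.1 ht₂ with rfl | rfl
        · exact hu
        · exact hv
      exact hfree e₁ ht₁
    · rw [upd_ne h₁, upd_ne h₂]
      rw [upd_ne h₁] at h1
      exact hπ.2 e₁ e₂ hne ⟨t, ht₁, ht₂⟩ h1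

end Basic

/-- A fan at `x` (in reverse order: the list ends with `y`). -/
inductive Fan (G : SimpleGraph V) (x y : V) (π : Sym2 V → Option (Fin D)) : List V → Prop
  | base : G.Adj x y → Fan G x y π [y]
  | cons {z w : V} {l : List V} {c : Fin D} (hf : Fan G x y π (z :: l)) (ha : G.Adj x w)
      (hc : π s(x, w) = some c) (hfree : freeAt π z c) : Fan G x y π (w :: z :: l)

theorem Fan.adj {π : Sym2 V → Option (Fin D)} {m : List V} (hf : Fan G x y π m) :
    ∀ v ∈ m, G.Adj x v := by
  induction hf with
  | base h => intro v hv; rw [List.mem_singleton] at hv; exact hv ▸ h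
  | cons hf ha hc hfree ih =>
    intro v hv
    rcases List.mem_cons.1 hv with rfl | hv
    · exact ha
    · exact ih v hv

theorem Fan.y_mem {π : Sym2 V → Option (Fin D)} {m : List V} (hf : Fan G x y π m) : y ∈ m := by
  induction hf with
  | base h => simp
  | cons hf ha hc hfree ih => exact List.mem_cons_of_mem _ ih

theorem Fan.suffix {π : Sym2 V → Option (Fin D)} {m l₂ : List V} (hf : Fan G x y π m)
    (hs : l₂ <:+ m) (hne : l₂ ≠ []) : Fan G x y π l₂ := by
  induction hf with
  | base h =>
    rcases List.suffix_cons_iff.1 hs with rfl | hs'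
    · exact Fan.base h
    · exact absurd (List.suffix_nil.1 hs') hne
  | cons hf ha hc hfree ih =>
    rcases List.suffix_cons_iff.1 hs with rfl | hs'
    · exact Fan.cons hf ha hc hfree
    · exact ih hs'

theorem fan_upd {π : Sym2 V → Option (Fin D)} {m : List V} {z : V} {γ : Fin D}
    (hf : Fan G x y π m) (hz : z ∉ m) :
    Fan G x y (upd π s(x, z) (some γ)) m := by
  induction hf with
  | base h => exact Fan.base h
  | @cons z' w l c hf ha hc hfree ih =>
    refine Fan.cons (c := c) (ih (fun h => hz (List.mem_cons_of_mem _ h))) ha ?_ ?_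
    · rw [upd_ne]
      · exact hc
      · intro h
        exact hz (by simp [(Sym2.congr_right.1 h)])
    · have hz' : z' ∉ s(x, z) := by
        rw [Sym2.mem_iff]
        rintro (rfl | rfl)
        · exact G.irrefl (hf.adj z' (List.mem_cons_self))
        · exact hz (List.mem_cons_of_mem _ (List.mem_cons_self))
      exact (freeAt_upd hz').2 hfree

/-- The one-step extension at the base of the fan. -/
theorem extend_base {π : Sym2 V → Option (Fin D)} (hxy : G.Adj x y)
    (hπ : IsProperPEC G D π) (hun : π s(x, y) = none)
    (hnx : ∀ σ, IsProperPEC G D σ → ¬ ∀ e, (σ e ≠ none ↔ (π e ≠ none ∨ e = s(x, y))))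
    {γ : Fin D} (h1 : freeAt π y γ) (h2 : freeAt π x γ) : False := by
  refine hnx (upd π s(x, y) (some γ)) (upd_proper hπ (G.mem_edgeSet.2 hxy) h2 h1) ?_
  intro e
  by_cases h : e = s(x, y)
  · subst h; simp [upd_same]
  · rw [upd_ne h]
    simp [h]

theorem free_x_of_colored {π : Sym2 V → Option (Fin D)} (hπ : IsProperPEC G D π)
    {z : V} {c γ : Fin D} (hc : π s(x, z) = some c) (hγ : freeAt π x γ) :
    freeAt (upd π s(x, z) (some γ)) x c := by
  intro e he
  by_cases h : e = s(x, z)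
  · subst h
    rw [upd_same]
    intro h'
    have : γ = c := by simpa using h'
    exact hγ s(x, z) (Sym2.mem_mk_left _ _) (this ▸ hc)
  · rw [upd_ne h]
    intro h'
    exact hπ.2 e s(x, z) h ⟨x, he, Sym2.mem_mk_left _ _⟩ (by simp [h']) (h'.trans hc.symm)

/-- The rotation lemma: no fan endpoint shares a free color with `x`. -/
theorem rot (hxy : G.Adj x y) :
    ∀ (n : ℕ) (π : Sym2 V → Option (Fin D)), IsProperPEC G D π → π s(x, y) = none →
    (∀ σ, IsProperPEC G D σ → ¬ ∀ e, (σ e ≠ none ↔ (π e ≠ none ∨ e = s(x, y)))) →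
    ∀ (z : V) (l : List V), Fan G x y π (z :: l) → (z :: l).Nodup → l.length ≤ n →
    ∀ γ : Fin D, freeAt π z γ → freeAt π x γ → False := by
  intro n
  induction n with
  | zero =>
    intro π hπ hun hnx z l hf hnd hlen γ h1 h2
    have hl : l = [] := List.eq_nil_of_length_eq_zero (Nat.le_zero.1 hlen)
    subst hl
    cases hf with
    | base h => exact extend_base hxy hπ hun hnx h1 h2
  | succ n ih =>
    intro π hπ hun hnx z l hf hnd hlen γ h1 h2
    cases hf with
    | base h => exact extend_base hxy hπ hun hnx h1 h2
    | @cons z' w l' c hf' ha hc hfree =>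
      -- here the list is z :: z' :: l', with w := z
      have hzmem : z ∉ z' :: l' := by
        simpa using (List.nodup_cons.1 hnd).1
      have hzy : z ≠ y := fun h => hzmem (h ▸ hf'.y_mem)
      set π' := upd π s(x, z) (some γ) with hπ'def
      have hπ' : IsProperPEC G D π' :=
        upd_proper hπ (G.mem_edgeSet.2 ha) h2 h1
      have hxyz : s(x, y) ≠ s(x, z) := fun h => hzy (Sym2.congr_right.1 h).symm
      have hun' : π' s(x, y) = none := by rw [hπ'def, upd_ne hxyz]; exact hun
      have hsupp : ∀ e, (π e ≠ none ↔ π' e ≠ none) := by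
        intro e
        by_cases h : e = s(x, z)
        · subst h; simp [hπ'def, upd_same, hc]
        · rw [hπ'def, upd_ne h]
      have hnx' : ∀ σ, IsProperPEC G D σ →
          ¬ ∀ e, (σ e ≠ none ↔ (π' e ≠ none ∨ e = s(x, y))) := by
        intro σ hσ hcon
        exact hnx σ hσ (fun e => (hcon e).trans (by rw [hsupp e]))
      have hf'' : Fan G x y π' (z' :: l') := fan_upd hf' hzmem
      have hz'x : z' ∉ s(x, z) := by
        rw [Sym2.mem_iff]
        rintro (rfl | rfl)
        · exact G.irrefl (hf'.adj z' (List.mem_cons_self))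
        · exact hzmem (List.mem_cons_self)
      refine ih π' hπ' hun' hnx' z' l' hf'' (List.nodup_cons.1 hnd).2 ?_ c
        ((freeAt_upd hz'x).2 hfree) (free_x_of_colored hπ hc h2)
      simp only [List.length_cons] at hlen
      omega


section Swap

variable {π : Sym2 V → Option (Fin D)} {α γ : Fin D} {S : Set V}

/-- Swap colors `α` and `γ` on edges meeting `S`. -/
noncomputable def swapc (π : Sym2 V → Option (Fin D)) (α γ : Fin D) (S : Set V) :
    Sym2 V → Option (Fin D) :=
  fun e => if ∃ t ∈ e, t ∈ S then
    (if π e = some α then some γ else if π e = some γ then some α else π e) else π e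

/-- `S` is closed under chain edges. -/
def SwClosed (π : Sym2 V → Option (Fin D)) (α γ : Fin D) (S : Set V) : Prop :=
  ∀ u v : V, u ∈ S → (π s(u, v) = some α ∨ π s(u, v) = some γ) → v ∈ S

theorem sw_closed_edge (hS : SwClosed π α γ S) {e : Sym2 V} {t v : V}
    (ht : t ∈ e) (htS : t ∈ S) (hv : v ∈ e) (hcol : π e = some α ∨ π e = some γ) : v ∈ S := by
  induction e with
  | _ a b =>
    rcases Sym2.mem_iff.1 ht with rfl | rfl <;> rcases Sym2.mem_iff.1 hv with rfl | rfl
    · exact htS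
    · exact hS t v htS hcol
    · exact hS t v htS (by rwa [Sym2.eq_swap])
    · exact htS

theorem sw_eq_of_not_mem (hS : SwClosed π α γ S) {v : V} {e : Sym2 V}
    (hv : v ∉ S) (hve : v ∈ e) : swapc π α γ S e = π e := by
  unfold swapc
  split_ifs with h h1 h2
  · obtain ⟨t, ht, htS⟩ := h
    exact absurd (sw_closed_edge hS ht htS hve (Or.inl h1)) hv
  · obtain ⟨t, ht, htS⟩ := h
    exact absurd (sw_closed_edge hS ht htS hve (Or.inr h2)) hv
  · rfl
  · rfl

theorem sw_eq_of_mem {v : V} {e : Sym2 V} (hv : v ∈ S) (hve : v ∈ e) :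
    swapc π α γ S e = (if π e = some α then some γ else if π e = some γ then some α else π e) :=
  if_pos ⟨v, hve, hv⟩

theorem sw_none_iff (e : Sym2 V) : swapc π α γ S e = none ↔ π e = none := by
  unfold swapc
  split_ifs with h h1 h2 <;> simp_all

theorem swf_inj {o o' : Option (Fin D)}
    (h : (if o = some α then some γ else if o = some γ then some α else o) =
      (if o' = some α then some γ else if o' = some γ then some α else o')) : o = o' := by
  split_ifs at h <;> simp_all

theorem sw_proper (hπ : IsProperPEC G D π) (hS : SwClosed π α γ S) :
    IsProperPEC G D (swapc π α γ S) := by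
  constructor
  · intro e h
    exact hπ.1 e (fun h' => h ((sw_none_iff e).2 h'))
  · rintro e₁ e₂ hne ⟨t, ht₁, ht₂⟩ h1 heq
    have h1' : π e₁ ≠ none := fun h' => h1 ((sw_none_iff e₁).2 h')
    by_cases hm₁ : ∃ t' ∈ e₁, t' ∈ S <;> by_cases hm₂ : ∃ t' ∈ e₂, t' ∈ S
    · rw [swapc, if_pos hm₁, swapc, if_pos hm₂] at heq
      exact hπ.2 e₁ e₂ hne ⟨t, ht₁, ht₂⟩ h1' (swf_inj heq)
    · rw [swapc, if_pos hm₁, swapc, if_neg hm₂] at heq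
      obtain ⟨t', ht', htS'⟩ := hm₁
      by_cases hc₁ : π e₁ = some α
      · rw [if_pos hc₁] at heq
        have : t ∈ S := sw_closed_edge hS ht' htS' ht₁ (Or.inl hc₁)
        exact hm₂ ⟨t, ht₂, this⟩
      · by_cases hc₂ : π e₁ = some γ
        · rw [if_neg hc₁, if_pos hc₂] at heq
          have : t ∈ S := sw_closed_edge hS ht' htS' ht₁ (Or.inr hc₂)
          exact hm₂ ⟨t, ht₂, this⟩
        · rw [if_neg hc₁, if_neg hc₂] at heq
          exact hπ.2 e₁ e₂ hne ⟨t, ht₁, ht₂⟩ h1' heq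
    · rw [swapc, if_neg hm₁, swapc, if_pos hm₂] at heq
      obtain ⟨t', ht', htS'⟩ := hm₂
      by_cases hc₁ : π e₂ = some α
      · rw [if_pos hc₁] at heq
        have : t ∈ S := sw_closed_edge hS ht' htS' ht₂ (Or.inl hc₁)
        exact hm₁ ⟨t, ht₁, this⟩
      · by_cases hc₂ : π e₂ = some γ
        · rw [if_neg hc₁, if_pos hc₂] at heq
          have : t ∈ S := sw_closed_edge hS ht' htS' ht₂ (Or.inr hc₂)
          exact hm₁ ⟨t, ht₁, this⟩
        · rw [if_neg hc₁, if_neg hc₂] at heq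
          exact hπ.2 e₁ e₂ hne ⟨t, ht₁, ht₂⟩ h1' heq
    · rw [swapc, if_neg hm₁, swapc, if_neg hm₂] at heq
      exact hπ.2 e₁ e₂ hne ⟨t, ht₁, ht₂⟩ h1' heq

theorem sw_free_notmem (hS : SwClosed π α γ S) {v : V} {c : Fin D} (hv : v ∉ S) :
    freeAt (swapc π α γ S) v c ↔ freeAt π v c := by
  constructor <;> intro H e he
  · have := H e he
    rwa [sw_eq_of_not_mem hS hv he] at this
  · rw [sw_eq_of_not_mem hS hv he]
    exact H e he

theorem sw_free_mem_swap (hαγ : α ≠ γ) {v : V} (hv : v ∈ S) :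
    freeAt (swapc π α γ S) v α ↔ freeAt π v γ := by
  constructor <;> intro H e he <;>
    have heq := sw_eq_of_mem (π := π) (α := α) (γ := γ) (S := S) hv he
  · intro hcol
    refine H e he ?_
    rw [heq, hcol]
    simp [Option.some.injEq, Ne.symm hαγ]
  · rw [heq]
    split_ifs with h1 h2
    · intro h
      exact hαγ (Option.some_inj.1 h).symm
    · exact absurd h2 (H e he)
    · exact h1

theorem sw_free_mem_other (hαγ : α ≠ γ) {v : V} {c : Fin D} (hv : v ∈ S)
    (h1 : c ≠ α) (h2 : c ≠ γ) :
    freeAt (swapc π α γ S) v c ↔ freeAt π v c := by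
  constructor <;> intro H e he <;> have heq := sw_eq_of_mem (π := π) (α := α) (γ := γ) hv he
  · have := H e he
    rw [heq] at this
    split_ifs at this with g1 g2
    · rw [g1]; simp [h1.symm]
    · rw [g2]; simp [h2.symm]
    · exact this
  · rw [heq]
    split_ifs with g1 g2
    · simp [h2.symm]
    · simp [h1.symm]
    · exact H e he

theorem fan_swap (hπ : IsProperPEC G D π) (hS : SwClosed π α γ S) (hαγ : α ≠ γ)
    (hfxα : freeAt π x α) (hxS : x ∉ S) {u₀ : V} (hu₀ : π s(x, u₀) = some γ)
    {m : List V} (hf : Fan G x y π m)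
    (hcond : ∀ (l₁ : List V) (v : V) (l₂ : List V), m = l₁ ++ u₀ :: v :: l₂ → v ∉ S) :
    Fan G x y (swapc π α γ S) m := by
  induction hf with
  | base h => exact Fan.base h
  | @cons z w l c hf' ha hc hfree ih =>
    have ih' : Fan G x y (swapc π α γ S) (z :: l) := by
      refine ih ?_
      intro l₁ v l₂ h
      exact hcond (w :: l₁) v l₂ (by simp [h])
    refine Fan.cons (c := c) ih' ha ?_ ?_
    · rw [sw_eq_of_not_mem hS hxS (Sym2.mem_mk_left _ _)]
      exact hc
    · by_cases hzS : z ∈ S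
      · have hcα : c ≠ α := by
          intro h
          exact hfxα s(x, w) (Sym2.mem_mk_left _ _) (h ▸ hc)
        by_cases hcγ : c = γ
        · subst hcγ
          have : s(x, w) = s(x, u₀) :=
            eq_of_color hπ (Sym2.mem_mk_left _ _) (Sym2.mem_mk_left _ _) hc hu₀
          have hwu : w = u₀ := Sym2.congr_right.1 this
          subst hwu
          exact absurd hzS (hcond [] z l rfl)
        · exact (sw_free_mem_other hαγ hzS hcα hcγ).2 hfree
      · exact (sw_free_notmem hS hzS).2 hfree

end Swap


section Chain

variable {π : Sym2 V → Option (Fin D)} {α γ : Fin D}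

/-- The chain graph for colors `α`, `γ`. -/
def cg (π : Sym2 V → Option (Fin D)) (α γ : Fin D) : SimpleGraph V :=
  SimpleGraph.fromEdgeSet {e | π e = some α ∨ π e = some γ}

theorem cg_adj {u v : V} :
    (cg π α γ).Adj u v ↔ (π s(u, v) = some α ∨ π s(u, v) = some γ) ∧ u ≠ v := by
  simp [cg, SimpleGraph.fromEdgeSet_adj, Set.mem_setOf_eq]

theorem cg_adj_of_col (hπ : IsProperPEC G D π) {u v : V}
    (h : π s(u, v) = some α ∨ π s(u, v) = some γ) : (cg π α γ).Adj u v := by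
  refine cg_adj.2 ⟨h, ?_⟩
  have : G.Adj u v := by
    rcases h with h | h
    · exact adj_of_colored hπ h
    · exact adj_of_colored hπ h
  exact this.ne

theorem nbr_unique (hπ : IsProperPEC G D π) {s t t' : V}
    (h1 : (cg π α γ).Adj s t) (h2 : (cg π α γ).Adj s t')
    (hcol : π s(s, t) = π s(s, t')) : t = t' := by
  obtain ⟨hc1, -⟩ := cg_adj.1 h1
  have hc : ∃ c : Fin D, π s(s, t) = some c := by
    rcases hc1 with h | h
    · exact ⟨α, h⟩
    · exact ⟨γ, h⟩
  obtain ⟨c, hc⟩ := hc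
  exact Sym2.congr_right.1
    (eq_of_color hπ (Sym2.mem_mk_left s t) (Sym2.mem_mk_left s t') hc (hcol ▸ hc))

theorem two_cover (hπ : IsProperPEC G D π) {s t t₁ t₂ : V}
    (h1 : (cg π α γ).Adj s t₁) (h2 : (cg π α γ).Adj s t₂) (hne : t₁ ≠ t₂)
    (ht : (cg π α γ).Adj s t) : t = t₁ ∨ t = t₂ := by
  obtain ⟨hc1, -⟩ := cg_adj.1 h1
  obtain ⟨hc2, -⟩ := cg_adj.1 h2
  obtain ⟨hct, -⟩ := cg_adj.1 ht
  rcases hc1 with hc1 | hc1 <;> rcases hc2 with hc2 | hc2 <;> rcases hct with hct | hct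
  · exact Or.inl (nbr_unique hπ ht h1 (hct.trans hc1.symm))
  · exact absurd (nbr_unique hπ h1 h2 (hc1.trans hc2.symm)) hne
  · exact Or.inl (nbr_unique hπ ht h1 (hct.trans hc1.symm))
  · exact Or.inr (nbr_unique hπ ht h2 (hct.trans hc2.symm))
  · exact Or.inr (nbr_unique hπ ht h2 (hct.trans hc2.symm))
  · exact Or.inl (nbr_unique hπ ht h1 (hct.trans hc1.symm))
  · exact absurd (nbr_unique hπ h1 h2 (hc1.trans hc2.symm)) hne
  · exact Or.inl (nbr_unique hπ ht h1 (hct.trans hc1.symm))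

/-- An interior vertex of a path has two distinct neighbours on the path. -/
theorem internal_two_nbrs {H : SimpleGraph V} {z z' : V} (q : H.Walk z z') (hq : q.IsPath)
    {s : V} (hs : s ∈ q.support) (hsz : s ≠ z) (hsz' : s ≠ z') :
    ∃ t₁ t₂ : V, t₁ ≠ t₂ ∧ H.Adj s t₁ ∧ H.Adj s t₂ ∧ t₁ ∈ q.support ∧ t₂ ∈ q.support := by
  set q₁ := q.takeUntil s hs with hq₁
  set q₂ := q.dropUntil s hs with hq₂
  have hsupp : q.support = q₁.support ++ q₂.support.tail := by
    conv_lhs => rw [← SimpleGraph.Walk.take_spec q hs]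
    rw [SimpleGraph.Walk.support_append]
  obtain ⟨t₁, h₁, r₁, hr₁⟩ := SimpleGraph.Walk.exists_eq_cons_of_ne hsz q₁.reverse
  obtain ⟨t₂, h₂, r₂, hr₂⟩ := SimpleGraph.Walk.exists_eq_cons_of_ne hsz' q₂
  have ht₁ : t₁ ∈ q₁.support := by
    have : t₁ ∈ q₁.reverse.support := by
      rw [hr₁]
      exact List.mem_cons_of_mem _ r₁.start_mem_support
    rwa [SimpleGraph.Walk.support_reverse, List.mem_reverse] at this
  have ht₂ : t₂ ∈ q₂.support.tail := by
    rw [hr₂, SimpleGraph.Walk.support_cons]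
    exact r₂.start_mem_support
  have hnd : (q₁.support ++ q₂.support.tail).Nodup := hsupp ▸ hq.support_nodup
  have hne : t₁ ≠ t₂ := fun h =>
    List.disjoint_of_nodup_append hnd ht₁ (h ▸ ht₂)
  exact ⟨t₁, t₂, hne, h₁, h₂, hsupp ▸ List.mem_append_left _ ht₁,
    hsupp ▸ List.mem_append_right _ ht₂⟩

theorem path_closure (hπ : IsProperPEC G D π) {z z' : V} (q : (cg π α γ).Walk z z')
    (hq : q.IsPath) (hzz' : z ≠ z')
    (hsubz : ∀ t t', (cg π α γ).Adj z t → (cg π α γ).Adj z t' → t = t')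
    (hsubz' : ∀ t t', (cg π α γ).Adj z' t → (cg π α γ).Adj z' t' → t = t') :
    ∀ s ∈ q.support, ∀ t, (cg π α γ).Adj s t → t ∈ q.support := by
  intro s hs t hst
  by_cases hsz : s = z
  · subst hsz
    obtain ⟨w, hadj, q', hq'⟩ := SimpleGraph.Walk.exists_eq_cons_of_ne hzz' q
    have hw : w ∈ q.support := by
      rw [hq', SimpleGraph.Walk.support_cons]
      exact List.mem_cons_of_mem _ q'.start_mem_support
    exact (hsubz t w hst hadj) ▸ hw
  · by_cases hsz' : s = z'
    · subst hsz'
      obtain ⟨w, hadj, q', hq'⟩ := SimpleGraph.Walk.exists_eq_cons_of_ne (Ne.symm hzz') q.reverse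
    

      have hw : w ∈ q.support := by
        have : w ∈ q.reverse.support := by
          rw [hq', SimpleGraph.Walk.support_cons]
          exact List.mem_cons_of_mem _ q'.start_mem_support
        rwa [SimpleGraph.Walk.support_reverse, List.mem_reverse] at this
      exact (hsubz' t w hst hadj) ▸ hw
    · obtain ⟨t₁, t₂, hne, h₁, h₂, ht₁, ht₂⟩ := internal_two_nbrs q hq hs hsz hsz'
      rcases two_cover hπ h₁ h₂ hne hst with rfl | rfl
      · exact ht₁
      · exact ht₂

theorem reach_in_support (hπ : IsProperPEC G D π) {z z' : V} (q : (cg π α γ).Walk z z')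
    (hq : q.IsPath) (hzz' : z ≠ z')
    (hsubz : ∀ t t', (cg π α γ).Adj z t → (cg π α γ).Adj z t' → t = t')
    (hsubz' : ∀ t t', (cg π α γ).Adj z' t → (cg π α γ).Adj z' t' → t = t') :
    ∀ b : V, (cg π α γ).Reachable z b → b ∈ q.support := by
  have hcl := path_closure hπ q hq hzz' hsubz hsubz'
  have key : ∀ (a b : V) (W : (cg π α γ).Walk a b), a ∈ q.support → b ∈ q.support := by
    intro a b W
    induction W with
    | nil => exact id
    | cons h W ih => exact fun ha => ih (hcl _ ha _ h)
  intro b hb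
  exact key z b hb.some q.start_mem_support

/-- `x`, `z`, `z'` cannot all lie on the same chain when each has only one chain colour. -/
theorem not_both_reach (hπ : IsProperPEC G D π) {z z' : V}
    (hfxα : freeAt π x α) (hfzγ : freeAt π z γ) (hfz'γ : freeAt π z' γ)
    (hxz : x ≠ z) (hxz' : x ≠ z') (hzz' : z ≠ z')
    (hrz : (cg π α γ).Reachable x z) (hrz' : (cg π α γ).Reachable x z') : False := by
  have hsubz : ∀ t t', (cg π α γ).Adj z t → (cg π α γ).Adj z t' → t = t' := by
    intro t t' h1 h2
    have hc1 : π s(z, t) = some α := by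
      rcases (cg_adj.1 h1).1 with h | h
      · exact h
      · exact absurd h (hfzγ _ (Sym2.mem_mk_left _ _))
    have hc2 : π s(z, t') = some α := by
      rcases (cg_adj.1 h2).1 with h | h
      · exact h
      · exact absurd h (hfzγ _ (Sym2.mem_mk_left _ _))
    exact nbr_unique hπ h1 h2 (hc1.trans hc2.symm)
  have hsubz' : ∀ t t', (cg π α γ).Adj z' t → (cg π α γ).Adj z' t' → t = t' := by
    intro t t' h1 h2
    have hc1 : π s(z', t) = some α := by
      rcases (cg_adj.1 h1).1 with h | h
      · exact h
      · exact absurd h (hfz'γ _ (Sym2.mem_mk_left _ _))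
    have hc2 : π s(z', t') = some α := by
      rcases (cg_adj.1 h2).1 with h | h
      · exact h
      · exact absurd h (hfz'γ _ (Sym2.mem_mk_left _ _))
    exact nbr_unique hπ h1 h2 (hc1.trans hc2.symm)
  obtain ⟨W⟩ := hrz.symm.trans hrz'
  set q := W.bypass with hqdef
  have hq : q.IsPath := W.bypass_isPath
  have hxsupp : x ∈ q.support :=
    reach_in_support hπ q hq hzz' hsubz hsubz' x hrz.symm
  obtain ⟨t₁, t₂, hne, h₁, h₂, -, -⟩ :=
    internal_two_nbrs q hq hxsupp hxz hxz'
  have hc1 : π s(x, t₁) = some γ := by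
    rcases (cg_adj.1 h₁).1 with h | h
    · exact absurd h (hfxα _ (Sym2.mem_mk_left _ _))
    · exact h
  have hc2 : π s(x, t₂) = some γ := by
    rcases (cg_adj.1 h₂).1 with h | h
    · exact absurd h (hfxα _ (Sym2.mem_mk_left _ _))
    · exact h
  exact hne (nbr_unique hπ h₁ h₂ (hc1.trans hc2.symm))

end Chain


section Counting1

variable {π : Sym2 V → Option (Fin D)}

theorem not_free_exists {v : V} {c : Fin D} (h : ¬ freeAt π v c) :
    ∃ e, v ∈ e ∧ π e = some c := by
  unfold freeAt at h
  push_neg at h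
  obtain ⟨e, he, hc⟩ := h
  exact ⟨e, he, by simpa using hc⟩

/-- Colors present at `v`. -/
noncomputable def presentF (π : Sym2 V → Option (Fin D)) (v : V) : Finset (Fin D) :=
  Finset.univ.filter (fun c => ¬ freeAt π v c)

/-- Colors free at `v`. -/
noncomputable def freeF (π : Sym2 V → Option (Fin D)) (v : V) : Finset (Fin D) :=
  Finset.univ.filter (fun c => freeAt π v c)

theorem freeF_present_card (v : V) : (freeF π v).card + (presentF π v).card = D := by
  rw [freeF, presentF]
  rw [Finset.card_filter_add_card_filter_not]
  simp

variable [DecidableRel G.Adj]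

theorem presentF_card_le (hπ : IsProperPEC G D π) (hun : π s(x, y) = none) (v : V) :
    (presentF π v).card ≤ ((G.incidenceFinset v).erase s(x, y)).card := by
  classical
  refine Finset.card_le_card_of_injOn
    (fun c => if h : ∃ e, v ∈ e ∧ π e = some c then h.choose else s(x, y)) ?_ ?_
  · intro c hc
    have h : ∃ e, v ∈ e ∧ π e = some c :=
      not_free_exists (by simpa [presentF] using hc)
    simp only [dif_pos h]
    obtain ⟨hve, hcol⟩ := h.choose_spec
    refine Finset.mem_erase.2 ⟨?_, ?_⟩
    · intro h'
      rw [h'] at hcol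
      simp [hun] at hcol
    · rw [SimpleGraph.mem_incidenceFinset]
      exact ⟨hπ.1 _ (by simp [hcol]), hve⟩
  · intro c hc c' hc' hf
    have h : ∃ e, v ∈ e ∧ π e = some c :=
      not_free_exists (by simpa [presentF] using hc)
    have h' : ∃ e, v ∈ e ∧ π e = some c' :=
      not_free_exists (by simpa [presentF] using hc')
    simp only [dif_pos h, dif_pos h'] at hf
    have h1 := h.choose_spec.2
    have h2 := h'.choose_spec.2
    rw [hf] at h1
    rw [h1] at h2
    exact Option.some_inj.1 h2

theorem freeF_card_ge_incident (hπ : IsProperPEC G D π) (hxy : G.Adj x y)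
    (hun : π s(x, y) = none) {v : V} (hv : v = x ∨ v = y) :
    D + 1 ≤ (freeF π v).card + G.degree v := by
  have hmem : s(x, y) ∈ G.incidenceFinset v := by
    rw [SimpleGraph.mem_incidenceFinset]
    refine ⟨G.mem_edgeSet.2 hxy, ?_⟩
    rcases hv with rfl | rfl <;> simp
  have herase : ((G.incidenceFinset v).erase s(x, y)).card + 1 = G.degree v := by
    rw [Finset.card_erase_of_mem hmem, ← SimpleGraph.card_incidenceFinset_eq_degree]
    have : 0 < (G.incidenceFinset v).card := Finset.card_pos.2 ⟨_, hmem⟩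
    omega
  have h1 := presentF_card_le (G := G) hπ hun v
  have h2 := freeF_present_card (π := π) v
  omega

theorem freeF_card_ge (hπ : IsProperPEC G D π) (hun : π s(x, y) = none) (v : V) :
    D ≤ (freeF π v).card + G.degree v := by
  have h1 := presentF_card_le (G := G) hπ hun v
  have h2 := freeF_present_card (π := π) v
  have h3 : ((G.incidenceFinset v).erase s(x, y)).card ≤ G.degree v := by
    rw [← SimpleGraph.card_incidenceFinset_eq_degree]
    exact Finset.card_le_card (Finset.erase_subset _ _)
  omega

theorem exists_free_x (hπ : IsProperPEC G D π) (hxy : G.Adj x y)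
    (hun : π s(x, y) = none) (hdx : G.degree x ≤ D) :
    ∃ α : Fin D, freeAt π x α := by
  have h := freeF_card_ge_incident (G := G) hπ hxy hun (Or.inl rfl)
  have : 0 < (freeF π x).card := by omega
  obtain ⟨α, hα⟩ := Finset.card_pos.1 this
  exact ⟨α, by simpa [freeF] using hα⟩

end Counting1

section Elem

variable {π : Sym2 V → Option (Fin D)} [DecidableRel G.Adj]

theorem elem_aux (hxy : G.Adj x y) (hπ : IsProperPEC G D π) (hun : π s(x, y) = none)
    (hnx : ∀ σ, IsProperPEC G D σ → ¬ ∀ e, (σ e ≠ none ↔ (π e ≠ none ∨ e = s(x, y))))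
    {α γ : Fin D} (hαγ : α ≠ γ) (hfxα : freeAt π x α)
    {u₀ : V} (hu₀ : π s(x, u₀) = some γ)
    {w : V} {lw : List V} (hfw : Fan G x y π (w :: lw)) (hnd : (w :: lw).Nodup)
    (hwγ : freeAt π w γ) (hnr : ¬ (cg π α γ).Reachable x w) : False := by
  set S : Set V := {t | (cg π α γ).Reachable w t} with hSdef
  have hxS : x ∉ S := fun h => hnr (SimpleGraph.Reachable.symm h)
  have hS : SwClosed π α γ S := by
    intro u v hu hcol
    exact SimpleGraph.Reachable.trans hu (cg_adj_of_col hπ hcol).reachable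
  set π₁ := swapc π α γ S with hπ₁def
  have hπ₁ : IsProperPEC G D π₁ := sw_proper hπ hS
  have hun₁ : π₁ s(x, y) = none := (sw_none_iff _).2 hun
  have hnx₁ : ∀ σ, IsProperPEC G D σ →
      ¬ ∀ e, (σ e ≠ none ↔ (π₁ e ≠ none ∨ e = s(x, y))) := by
    intro σ hσ hcon
    refine hnx σ hσ (fun e => (hcon e).trans ?_)
    exact or_congr (not_congr (sw_none_iff e)) Iff.rfl
  have hwS : w ∈ S := SimpleGraph.Reachable.refl w
  have hfx₁ : freeAt π₁ x α := (sw_free_notmem hS hxS).2 hfxα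
  by_cases hbad : ∃ (l₁ : List V) (v : V) (l₂ : List V),
      (w :: lw) = l₁ ++ u₀ :: v :: l₂ ∧ v ∈ S
  · obtain ⟨l₁, v, l₂, heq, hvS⟩ := hbad
    have hsfx : (u₀ :: v :: l₂) <:+ (w :: lw) := ⟨l₁, heq.symm⟩
    have hfu : Fan G x y π (u₀ :: v :: l₂) := hfw.suffix hsfx (by simp)
    have hndu : (u₀ :: v :: l₂).Nodup := hsfx.sublist.nodup hnd
    cases hfu with
    | @cons _ _ _ c hf' ha hc hfree =>
      have hcγ : c = γ := Option.some_inj.1 (hc.symm.trans hu₀)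
      have hfreeγ : freeAt π v γ := hcγ ▸ hfree
      have hu₀nm : u₀ ∉ v :: l₂ := (List.nodup_cons.1 hndu).1
      have hfan₁ : Fan G x y π₁ (v :: l₂) := by
        refine fan_swap hπ hS hαγ hfxα hxS hu₀ hf' ?_
        intro m₁ v' m₂ hm
        exact absurd (by rw [hm]; simp : u₀ ∈ v :: l₂) hu₀nm
      exact rot hxy l₂.length π₁ hπ₁ hun₁ hnx₁ v l₂ hfan₁ (List.nodup_cons.1 hndu).2
        le_rfl α ((sw_free_mem_swap hαγ hvS).2 hfreeγ) hfx₁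
  · have hcond : ∀ (l₁ : List V) (v : V) (l₂ : List V),
        (w :: lw) = l₁ ++ u₀ :: v :: l₂ → v ∉ S := by
      intro l₁ v l₂ h hvS
      exact hbad ⟨l₁, v, l₂, h, hvS⟩
    have hfan₁ : Fan G x y π₁ (w :: lw) := fan_swap hπ hS hαγ hfxα hxS hu₀ hfw hcond
    exact rot hxy lw.length π₁ hπ₁ hun₁ hnx₁ w lw hfan₁ hnd le_rfl α
      ((sw_free_mem_swap hαγ hwS).2 hwγ) hfx₁

theorem elem (hxy : G.Adj x y) (hπ : IsProperPEC G D π) (hun : π s(x, y) = none)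
    (hnx : ∀ σ, IsProperPEC G D σ → ¬ ∀ e, (σ e ≠ none ↔ (π e ≠ none ∨ e = s(x, y))))
    (hdx : G.degree x ≤ D)
    {z z' : V} {l l' : List V} (hfz : Fan G x y π (z :: l)) (hndz : (z :: l).Nodup)
    (hfz' : Fan G x y π (z' :: l')) (hndz' : (z' :: l').Nodup) (hne : z ≠ z')
    {γ : Fin D} (h1 : freeAt π z γ) (h2 : freeAt π z' γ) : False := by
  obtain ⟨α, hα⟩ := exists_free_x (G := G) hπ hxy hun hdx
  have hγx : ¬ freeAt π x γ :=
    fun h => rot hxy l.length π hπ hun hnx z l hfz hndz le_rfl γ h1 h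
  have hαγ : α ≠ γ := fun h => hγx (h ▸ hα)
  obtain ⟨e, he, hecol⟩ := not_free_exists hγx
  obtain ⟨u₀, rfl⟩ := Sym2.mem_iff_exists.1 he
  have hxz : x ≠ z := (hfz.adj z (List.mem_cons_self)).ne
  have hxz' : x ≠ z' := (hfz'.adj z' (List.mem_cons_self)).ne
  by_cases hr : (cg π α γ).Reachable x z
  · have hr' : ¬ (cg π α γ).Reachable x z' :=
      fun h => not_both_reach hπ hα h1 h2 hxz hxz' hne hr h
    exact elem_aux hxy hπ hun hnx hαγ hα hecol hfz' hndz' h2 hr'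
  · exact elem_aux hxy hπ hun hnx hαγ hα hecol hfz hndz h1 hr

end Elem


section Main

variable [DecidableRel G.Adj] {π : Sym2 V → Option (Fin D)}

theorem main (hΔ : G.maxDegree ≤ D) (hxy : G.Adj x y)
    (hweak : ((G.neighborFinset x).filter (fun w => G.degree w = D)).card ≤
      D - G.degree y + (if G.degree y = D then 1 else 0))
    (hπ : IsProperPEC G D π) (hun : π s(x, y) = none)
    (hnx : ∀ σ, IsProperPEC G D σ → ¬ ∀ e, (σ e ≠ none ↔ (π e ≠ none ∨ e = s(x, y)))) :
    False := by
  classical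
  have hdeg : ∀ v, G.degree v ≤ D := fun v => le_trans (G.degree_le_maxDegree v) hΔ
  set Z : Finset V := Finset.univ.filter
    (fun v => G.Adj x v ∧ ∃ l, Fan G x y π (v :: l) ∧ (v :: l).Nodup) with hZdef
  have hyZ : y ∈ Z := by
    refine Finset.mem_filter.2 ⟨Finset.mem_univ _, hxy, [], Fan.base hxy, by simp⟩
  have hclose : ∀ v ∈ Z, ∀ c : Fin D, freeAt π v c → ∀ w' : V,
      π s(x, w') = some c → w' ∈ Z := by
    intro v hv c hc w' hw'
    obtain ⟨-, hadj, l, hf, hnd⟩ := Finset.mem_filter.1 hv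
    have hadjw : G.Adj x w' := adj_of_colored hπ hw'
    by_cases hm : w' ∈ v :: l
    · obtain ⟨l₁, l₂, heq⟩ := List.append_of_mem hm
      have hsfx : (w' :: l₂) <:+ (v :: l) := ⟨l₁, heq.symm⟩
      exact Finset.mem_filter.2 ⟨Finset.mem_univ _, hadjw, l₂,
        hf.suffix hsfx (by simp), hsfx.sublist.nodup hnd⟩
    · exact Finset.mem_filter.2 ⟨Finset.mem_univ _, hadjw, v :: l,
        Fan.cons hf hadjw hw' hc, List.nodup_cons.2 ⟨hm, hnd⟩⟩
  have hnotx : ∀ v ∈ Z, ∀ c : Fin D, freeAt π v c → ¬ freeAt π x c := by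
    intro v hv c hc hx
    obtain ⟨-, hadj, l, hf, hnd⟩ := Finset.mem_filter.1 hv
    exact rot hxy l.length π hπ hun hnx v l hf hnd le_rfl c hc hx
  have hdisj : ∀ v ∈ Z, ∀ v' ∈ Z, v ≠ v' → Disjoint (freeF π v) (freeF π v') := by
    intro v hv v' hv' hne
    rw [Finset.disjoint_left]
    intro c hc hc'
    obtain ⟨-, hadj, l, hf, hnd⟩ := Finset.mem_filter.1 hv
    obtain ⟨-, hadj', l', hf', hnd'⟩ := Finset.mem_filter.1 hv'
    exact elem hxy hπ hun hnx (hdeg x) hf hnd hf' hnd' hne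
      (by simpa [freeF] using hc) (by simpa [freeF] using hc')
  have hsum : ∑ v ∈ Z, (freeF π v).card = (Z.biUnion (freeF π)).card :=
    (Finset.card_biUnion hdisj).symm
  have hUle : (Z.biUnion (freeF π)).card ≤ (Z.erase y).card := by
    refine Finset.card_le_card_of_injOn
      (fun c => if h : ∃ w', π s(x, w') = some c then h.choose else x) ?_ ?_
    · intro c hc
      obtain ⟨v, hvZ, hcfree⟩ := Finset.mem_biUnion.1 hc
      have hcfree' : freeAt π v c := by simpa [freeF] using hcfree
      have hnx' : ¬ freeAt π x c := hnotx v hvZ c hcfree'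
      obtain ⟨e, he, hecol⟩ := not_free_exists hnx'
      obtain ⟨w', rfl⟩ := Sym2.mem_iff_exists.1 he
      have h : ∃ w'', π s(x, w'') = some c := ⟨w', hecol⟩
      simp only [dif_pos h]
      have hcolc : π s(x, h.choose) = some c := h.choose_spec
      refine Finset.mem_erase.2 ⟨?_, hclose v hvZ c hcfree' _ hcolc⟩
      intro hy
      rw [hy] at hcolc
      simp [hun] at hcolc
    · intro c hc c' hc' hf
      obtain ⟨v, hvZ, hcfree⟩ := Finset.mem_biUnion.1 hc
      obtain ⟨v', hvZ', hcfree'⟩ := Finset.mem_biUnion.1 hc'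
      have h : ∃ w'', π s(x, w'') = some c := by
        obtain ⟨e, he, hecol⟩ := not_free_exists (hnotx v hvZ c (by simpa [freeF] using hcfree))
        obtain ⟨w', rfl⟩ := Sym2.mem_iff_exists.1 he
        exact ⟨w', hecol⟩
      have h' : ∃ w'', π s(x, w'') = some c' := by
        obtain ⟨e, he, hecol⟩ :=
          not_free_exists (hnotx v' hvZ' c' (by simpa [freeF] using hcfree'))
        obtain ⟨w', rfl⟩ := Sym2.mem_iff_exists.1 he
        exact ⟨w', hecol⟩
      simp only [dif_pos h, dif_pos h'] at hf
      have h1 := h.choose_spec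
      have h2 := h'.choose_spec
      rw [hf] at h1
      rw [h1] at h2
      exact Option.some_inj.1 h2
  set T := Z.erase y with hTdef
  have hTcard : T.card + 1 = Z.card := by
    rw [hTdef, Finset.card_erase_of_mem hyZ]
    have : 0 < Z.card := Finset.card_pos.2 ⟨y, hyZ⟩
    omega
  have hsplit : (freeF π y).card + ∑ v ∈ T, (freeF π v).card = ∑ v ∈ Z, (freeF π v).card := by
    rw [hTdef]
    exact Finset.add_sum_erase Z (fun v => (freeF π v).card) hyZ
  set T1 := T.filter (fun v => G.degree v = D) with hT1def
  set T2 := T.filter (fun v => ¬ G.degree v = D) with hT2def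
  have hT12 : T1.card + T2.card = T.card := Finset.card_filter_add_card_filter_not _
  have hT2le : T2.card ≤ ∑ v ∈ T, (freeF π v).card := by
    calc T2.card = ∑ _v ∈ T2, 1 := by simp
    _ ≤ ∑ v ∈ T2, (freeF π v).card := by
        refine Finset.sum_le_sum ?_
        intro v hv
        have hvT : v ∈ T := Finset.mem_filter.1 hv |>.1
        have hvd : G.degree v ≠ D := Finset.mem_filter.1 hv |>.2
        have := freeF_card_ge (G := G) (x := x) (y := y) hπ hun v
        have := hdeg v
        omega
    _ ≤ ∑ v ∈ T, (freeF π v).card :=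
        Finset.sum_le_sum_of_subset (Finset.filter_subset _ _)
  have hfy := freeF_card_ge_incident (G := G) hπ hxy hun (Or.inr rfl : y = x ∨ y = y)
  -- main count: T1.card + degree y ≥ D + 1
  have hmain : D + 1 ≤ T1.card + G.degree y := by
    have h1 : (freeF π y).card + ∑ v ∈ T, (freeF π v).card ≤ T.card := by
      rw [hsplit, hsum]
      exact hUle
    omega
  -- relate to hweak
  set K := (G.neighborFinset x).filter (fun w => G.degree w = D) with hKdef
  have hT1K : T1 ⊆ K := by
    intro v hv
    obtain ⟨hvT, hvd⟩ := Finset.mem_filter.1 hv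
    obtain ⟨-, hadj, -⟩ := Finset.mem_filter.1 (Finset.mem_of_mem_erase hvT)
    exact Finset.mem_filter.2 ⟨(G.mem_neighborFinset x v).2 hadj, hvd⟩
  have hdy : G.degree y ≤ D := hdeg y
  by_cases hyd : G.degree y = D
  · have hyK : y ∈ K := Finset.mem_filter.2 ⟨(G.mem_neighborFinset x y).2 hxy, hyd⟩
    have hynT1 : y ∉ T1 := fun h =>
      Finset.notMem_erase y Z (Finset.mem_filter.1 h |>.1)
    have hins : insert y T1 ⊆ K := Finset.insert_subset hyK hT1K
    have hcard : T1.card + 1 ≤ K.card := by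
      rw [← Finset.card_insert_of_notMem hynT1]
      exact Finset.card_le_card hins
    rw [hyd] at hweak
    simp at hweak
    omega
  · have hcard : T1.card ≤ K.card := Finset.card_le_card hT1K
    rw [if_neg hyd] at hweak
    omega

end Main

end VALaux

/-- Vizing Adjacency Lemma. -/
theorem stmt2 {V : Type} [Fintype V] [DecidableEq V] (D : ℕ) (hD : 0 < D)
    (G : SimpleGraph V) [DecidableRel G.Adj] (hΔ : G.maxDegree ≤ D)
    (x y : V) (hxy : G.Adj x y)
    (hweak : ((G.neighborFinset x).filter (fun w => G.degree w = D)).card ≤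
      D - G.degree y + (if G.degree y = D then 1 else 0))
    (π : Sym2 V → Option (Fin D)) (hπ : IsProperPEC G D π) (huncol : π s(x, y) = none) :
    ∃ σ : Sym2 V → Option (Fin D), IsProperPEC G D σ ∧
      ∀ e : Sym2 V, (σ e ≠ none ↔ (π e ≠ none ∨ e = s(x, y))) := by
  by_contra hne
  exact VALaux.main hΔ hxy hweak hπ huncol (fun σ hσ hcon => hne ⟨σ, hσ, hcon⟩)
end

section
/- Let G = (V, E) be a simple graph such that Δ(G) ≤ 8 and let π be a partial 8-edge-coloring of G. If e ∈ E is an uncolored butterfly-like edge such that all edges at distance at most 1 from e are colored, then e is of at least one of the types 0, 1_{ab}, 2_{ab}, 3_{ab}, 4_{ab}, 5_{ab}, 6_{abcd} for some pairwise distinct colors a, b, c, d ∈ {1,…,8}. -/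
open SimpleGraph

namespace Stmt9Aux

variable {V : Type}

lemma mem_sym2_exists {v : V} {e : Sym2 V} (h : v ∈ e) : ∃ w, e = s(v, w) :=
  ⟨Sym2.Mem.other h, (Sym2.other_spec h).symm⟩

lemma sym2_ne_left {p q x y : V} (h : p ≠ x) (h' : p ≠ y) : s(p, q) ≠ s(x, y) := by
  intro hh
  rw [Sym2.eq_iff] at hh
  rcases hh with ⟨h1, _⟩ | ⟨h1, _⟩
  exacts [h h1, h' h1]

lemma sym2_ne_right {p q x y : V} (h : q ≠ x) (h' : q ≠ y) : s(p, q) ≠ s(x, y) := by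
  intro hh
  rw [Sym2.eq_iff] at hh
  rcases hh with ⟨_, h1⟩ | ⟨_, h1⟩
  exacts [h' h1, h h1]

lemma no_share {p q r t v w w' : V} (h : s(v, w) = s(p, q)) (h' : s(v, w') = s(r, t))
    (h1 : p ≠ r) (h2 : p ≠ t) (h3 : q ≠ r) (h4 : q ≠ t) : False := by
  have hv : v ∈ s(p, q) := h ▸ Sym2.mem_mk_left v w
  have hv' : v ∈ s(r, t) := h' ▸ Sym2.mem_mk_left v w'
  rw [Sym2.mem_iff] at hv hv'
  rcases hv with rfl | rfl <;> rcases hv' with h5 | h5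
  exacts [h1 h5, h2 h5, h3 h5, h4 h5]

lemma unique_color {G : SimpleGraph V} {D : ℕ} {π : Sym2 V → Option (Fin D)}
    (hπ : IsProperPEC G D π) {e₀ : Sym2 V} {c : Fin D} (h0 : π e₀ = some c) {v : V}
    (hv : v ∈ e₀) {e : Sym2 V} (he : v ∈ e) (hne : e ≠ e₀) : π e ≠ some c := by
  intro hc
  have := hπ.2 e e₀ hne ⟨v, he, hv⟩ (by rw [hc]; exact Option.some_ne_none _)
  rw [hc, h0] at this
  exact this rfl

lemma freeAt_of_nbrs [Fintype V] [DecidableEq V] {G : SimpleGraph V} [DecidableRel G.Adj]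
    {D : ℕ} {π : Sym2 V → Option (Fin D)} (hπ : IsProperPEC G D π)
    {v a₁ a₂ a₃ : V} (hN : G.neighborFinset v = {a₁, a₂, a₃}) {γ : Fin D}
    (h1 : π s(v, a₁) ≠ some γ) (h2 : π s(v, a₂) ≠ some γ) (h3 : π s(v, a₃) ≠ some γ) :
    freeAt π v γ := by
  intro e hv hc
  obtain ⟨w, rfl⟩ := mem_sym2_exists hv
  have hedge : s(v, w) ∈ G.edgeSet := hπ.1 _ (by rw [hc]; exact Option.some_ne_none _)
  have hadj : G.Adj v w := (SimpleGraph.mem_edgeSet G).1 hedge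
  have hw : w ∈ G.neighborFinset v := by rw [SimpleGraph.mem_neighborFinset]; exact hadj
  rw [hN] at hw
  simp only [Finset.mem_insert, Finset.mem_singleton] at hw
  rcases hw with rfl | rfl | rfl
  exacts [h1 hc, h2 hc, h3 hc]

lemma exists_free [Fintype V] [DecidableEq V] {G : SimpleGraph V} [DecidableRel G.Adj]
    (hΔ : G.maxDegree ≤ 8) {π : Sym2 V → Option (Fin 8)} (hπ : IsProperPEC G 8 π)
    {x y : V} (hxy : G.Adj x y) (huncol : π s(x, y) = none) : ∃ a, freeAt π x a := by
  by_contra h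
  push_neg at h
  have h' : ∀ a : Fin 8, ∃ e, x ∈ e ∧ π e = some a := by
    intro a
    obtain ⟨e, he⟩ := not_forall.1 (h a)
    push_neg at he
    exact ⟨e, he.1, he.2⟩
  choose e hxe hce using h'
  have hw : ∀ a, ∃ w, e a = s(x, w) := fun a => mem_sym2_exists (hxe a)
  choose w hwe using hw
  have hadj : ∀ a, G.Adj x (w a) := by
    intro a
    have : e a ∈ G.edgeSet := hπ.1 _ (by rw [hce a]; exact Option.some_ne_none _)
    rw [hwe a] at this
    exact (SimpleGraph.mem_edgeSet G).1 this
  have hwy : ∀ a, w a ≠ y := by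
    intro a hay
    have := hce a
    rw [hwe a, hay, huncol] at this
    exact nomatch this
  have hinj : Function.Injective w := by
    intro a b hab
    have h1 := hce a
    have h2 := hce b
    rw [hwe a, hab] at h1
    rw [hwe b] at h2
    rw [h1] at h2
    exact Option.some.inj h2
  have hsub : Finset.univ.image w ⊆ (G.neighborFinset x).erase y := by
    intro t ht
    simp only [Finset.mem_image, Finset.mem_univ, true_and] at ht
    obtain ⟨a, rfl⟩ := ht
    exact Finset.mem_erase.2 ⟨hwy a, by rw [SimpleGraph.mem_neighborFinset]; exact hadj a⟩
  have h8 : 8 ≤ ((G.neighborFinset x).erase y).card := by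
    calc 8 = (Finset.univ.image w).card := by
            rw [Finset.card_image_of_injective _ hinj, Finset.card_univ, Fintype.card_fin]
    _ ≤ _ := Finset.card_le_card hsub
  have hy : y ∈ G.neighborFinset x := by rw [SimpleGraph.mem_neighborFinset]; exact hxy
  have hpos : 0 < (G.neighborFinset x).card := Finset.card_pos.2 ⟨y, hy⟩
  have hdeg : ((G.neighborFinset x).erase y).card = (G.neighborFinset x).card - 1 :=
    Finset.card_erase_of_mem hy
  have hmax := G.degree_le_maxDegree x
  rw [SimpleGraph.degree] at hmax
  omega

lemma exists_fresh (s : Finset (Fin 8)) (h : s.card < 8) : ∃ d, d ∉ s := by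
  by_contra h'
  push_neg at h'
  have hsub : (Finset.univ : Finset (Fin 8)) ⊆ s := fun t _ => h' t
  have := Finset.card_le_card hsub
  rw [Finset.card_univ, Fintype.card_fin] at this
  omega

lemma card5 (a b c d e : Fin 8) : ({a, b, c, d, e} : Finset (Fin 8)).card < 8 := by
  have h1 := Finset.card_insert_le a ({b, c, d, e} : Finset (Fin 8))
  have h2 := Finset.card_insert_le b ({c, d, e} : Finset (Fin 8))
  have h3 := Finset.card_insert_le c ({d, e} : Finset (Fin 8))
  have h4 := Finset.card_insert_le d ({e} : Finset (Fin 8))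
  have h5 : ({e} : Finset (Fin 8)).card = 1 := Finset.card_singleton e
  omega

lemma chainGraph_adj {D : ℕ} {π : Sym2 V → Option (Fin D)} {a b : Fin D} {u v : V} :
    (chainGraph π a b).Adj u v ↔ (π s(u, v) = some a ∨ π s(u, v) = some b) ∧ u ≠ v := by
  simp [chainGraph, SimpleGraph.fromEdgeSet_adj, Set.mem_setOf_eq]

lemma chainGraph_comm {D : ℕ} (π : Sym2 V → Option (Fin D)) (a b : Fin D) :
    chainGraph π a b = chainGraph π b a := by
  unfold chainGraph
  congr 1
  ext e
  exact or_comm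

lemma chainReach_comm {D : ℕ} {π : Sym2 V → Option (Fin D)} {a b : Fin D} {u v : V}
    (h : chainReach π a b u v) : chainReach π b a u v := by
  unfold chainReach at *
  rwa [chainGraph_comm]

lemma inChainCycle_comm {D : ℕ} {π : Sym2 V → Option (Fin D)} {a b : Fin D} {x : V} :
    inChainCycle π a b x ↔ inChainCycle π b a x := by
  unfold inChainCycle chainReach chainEndpoint
  rw [chainGraph_comm]

lemma endpoint_left {G : SimpleGraph V} {D : ℕ} {π : Sym2 V → Option (Fin D)}
    (hπ : IsProperPEC G D π) {v : V} {a b : Fin D} (h : freeAt π v a) :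
    chainEndpoint π a b v := by
  intro w hw w' hw'
  rw [SimpleGraph.mem_neighborSet, chainGraph_adj] at hw hw'
  have h1 : π s(v, w) = some b := hw.1.resolve_left (h _ (Sym2.mem_mk_left v w))
  have h2 : π s(v, w') = some b := hw'.1.resolve_left (h _ (Sym2.mem_mk_left v w'))
  by_contra hne
  exact unique_color hπ h1 (Sym2.mem_mk_left v w) (Sym2.mem_mk_left v w')
    (fun hh => hne (Sym2.congr_right.mp hh).symm) h2

lemma endpoint_right {G : SimpleGraph V} {D : ℕ} {π : Sym2 V → Option (Fin D)}
    (hπ : IsProperPEC G D π) {v : V} {a b : Fin D} (h : freeAt π v b) :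
    chainEndpoint π a b v := by
  unfold chainEndpoint
  rw [chainGraph_comm]
  exact endpoint_left hπ h

lemma edgeDistLE_self {G : SimpleGraph V} {x y : V} : edgeDistLE G 1 s(x, y) s(x, y) :=
  ⟨x, Sym2.mem_mk_left x y, x, Sym2.mem_mk_left x y, SimpleGraph.Walk.nil, by simp⟩

lemma edgeDistLE_left {G : SimpleGraph V} {w x y : V} : edgeDistLE G 1 s(x, w) s(x, y) :=
  ⟨x, Sym2.mem_mk_left x w, x, Sym2.mem_mk_left x y, SimpleGraph.Walk.nil, by simp⟩

lemma edgeDistLE_of_adj {G : SimpleGraph V} {v w x y : V} (h : G.Adj v x) :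
    edgeDistLE G 1 s(v, w) s(x, y) :=
  ⟨v, Sym2.mem_mk_left v w, x, Sym2.mem_mk_left x y,
    SimpleGraph.Walk.cons h SimpleGraph.Walk.nil, by simp⟩

lemma edgeDistLE_yleft {G : SimpleGraph V} {w x y : V} : edgeDistLE G 1 s(y, w) s(x, y) :=
  ⟨y, Sym2.mem_mk_left y w, y, Sym2.mem_mk_right x y, SimpleGraph.Walk.nil, by simp⟩

end Stmt9Aux

namespace Stmt9Aux
variable {V : Type}

lemma option_some_or {α : Type*} (a : α) (o : Option α) : (some a).or o = some a := rfl

lemma isProperPEC_of_vertex {G : SimpleGraph V} {D : ℕ} {σ : Sym2 V → Option (Fin D)}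
    (h1 : ∀ e, σ e ≠ none → e ∈ G.edgeSet)
    (h2 : ∀ v w w' : V, w ≠ w' → σ s(v, w) ≠ none → σ s(v, w) ≠ σ s(v, w')) :
    IsProperPEC G D σ := by
  refine ⟨h1, fun e₁ e₂ hne hsh hnn => ?_⟩
  obtain ⟨v, hv1, hv2⟩ := hsh
  obtain ⟨w, rfl⟩ := mem_sym2_exists hv1
  obtain ⟨w', rfl⟩ := mem_sym2_exists hv2
  exact h2 v w w' (fun h => hne (by rw [h])) hnn

/-- Patching a proper partial coloring by a locally consistent finite modification `m`. -/
lemma hasType0_of_patch {G : SimpleGraph V} {π : Sym2 V → Option (Fin 8)}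
    (hπ : IsProperPEC G 8 π) {x y : V} (m : Sym2 V → Option (Fin 8))
    (Hm1 : ∀ e, m e ≠ none → e ∈ G.edgeSet)
    (Hm2 : ∀ e, m e ≠ none → edgeDistLE G 1 e s(x, y))
    (Hm3 : ∀ e, m e ≠ none → e ≠ s(x, y) → π e ≠ none)
    (Hm4 : m s(x, y) ≠ none)
    (Hm5 : ∀ v w w' : V, w ≠ w' → m s(v, w) ≠ none → m s(v, w) ≠ m s(v, w'))
    (Hm6 : ∀ (v w w' : V) (c : Fin 8), w ≠ w' → m s(v, w) = some c → m s(v, w') = none →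
      π s(v, w') ≠ some c) :
    HasType0 G π x y := by
  have hedge : ∀ e, (m e).or (π e) ≠ none → e ∈ G.edgeSet := by
    intro e he
    rcases hm : m e with _ | c
    · rw [hm, Option.none_or] at he
      exact hπ.1 e he
    · exact Hm1 e (by rw [hm]; exact Option.some_ne_none _)
  refine ⟨fun e => (m e).or (π e), ⟨fun e he => hedge e he, ?_⟩, ?_, ?_⟩
  · have hv : ∀ v w w' : V, w ≠ w' → (m s(v, w)).or (π s(v, w)) ≠ none →
        (m s(v, w)).or (π s(v, w)) ≠ (m s(v, w')).or (π s(v, w')) := by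
      intro v w w' hne hnn
      rcases hm : m s(v, w) with _ | c <;> rcases hm' : m s(v, w') with _ | c' <;>
        simp only [hm, hm', Option.none_or, option_some_or] at hnn ⊢
      · exact hπ.2 _ _ (fun h => hne (Sym2.congr_right.mp h)) ⟨v, Sym2.mem_mk_left _ _,
          Sym2.mem_mk_left _ _⟩ hnn
      · intro h
        exact Hm6 v w' w c' hne.symm hm' hm (by rw [← h])
      · intro h
        exact Hm6 v w w' c hne hm hm' h.symm
      · have := Hm5 v w w' hne (by rw [hm]; exact Option.some_ne_none _)
        rw [hm, hm'] at this
        exact this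
    exact (isProperPEC_of_vertex hedge hv).2
  · intro e
    rcases hm : m e with _ | c <;> simp only [hm, Option.none_or, option_some_or]
    · constructor
      · exact fun h => Or.inl h
      · rintro (h | rfl)
        · exact h
        · exact absurd hm Hm4
    · constructor
      · intro _
        by_cases hxy : e = s(x, y)
        · exact Or.inr hxy
        · exact Or.inl (Hm3 e (by rw [hm]; exact Option.some_ne_none _) hxy)
      · intro _
        exact Option.some_ne_none _
  · intro e he
    rcases hm : m e with _ | c
    · simp only [hm, Option.none_or]
    · exact absurd (Hm2 e (by rw [hm]; exact Option.some_ne_none _)) he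

end Stmt9Aux

namespace Stmt9Aux
variable {V : Type} [DecidableEq V]

/-- Case A: a color free at both endpoints. -/
lemma type0_color {G : SimpleGraph V} {π : Sym2 V → Option (Fin 8)}
    (hπ : IsProperPEC G 8 π) {x y : V} {a : Fin 8} (hxy : G.Adj x y)
    (hax : freeAt π x a) (hay : freeAt π y a) : HasType0 G π x y := by
  refine hasType0_of_patch hπ (fun e => if e = s(x, y) then some a else none)
    ?_ ?_ ?_ ?_ ?_ ?_
  · intro e he
    by_cases h : e = s(x, y)
    · rw [h]; exact hxy
    · simp [h] at he
  · intro e he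
    by_cases h : e = s(x, y)
    · rw [h]; exact edgeDistLE_self
    · simp [h] at he
  · intro e he hne
    simp [hne] at he
  · simp
  · intro v w w' hne hn heq
    by_cases c1 : s(v, w) = s(x, y)
    · by_cases c2 : s(v, w') = s(x, y)
      · exact hne (Sym2.congr_right.mp (c1.trans c2.symm))
      · simp [c1, c2] at heq
    · simp [c1] at hn
  · intro v w w' c hne hsome hnone
    by_cases c1 : s(v, w) = s(x, y)
    · have hsome' : some a = some c := by simpa [c1] using hsome
      obtain rfl : a = c := Option.some.inj hsome'
      rcases Sym2.eq_iff.mp c1 with ⟨rfl, rfl⟩ | ⟨rfl, rfl⟩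
      · exact hax _ (Sym2.mem_mk_left _ _)
      · exact hay _ (Sym2.mem_mk_left _ _)
    · simp [c1] at hsome

/-- The single swap: recolor `xw₁ ↦ a`, `zw₁ ↦ β₁`, `xy ↦ β₁`
(where `π(xw₁) = β₁`, `π(zw₁) = a`). -/
lemma type0_swap1 {G : SimpleGraph V} {π : Sym2 V → Option (Fin 8)}
    (hπ : IsProperPEC G 8 π) {x y z w1 : V} {a β1 : Fin 8}
    (hxy : G.Adj x y) (hxw1 : G.Adj x w1) (hzw1 : G.Adj z w1) (hzx : G.Adj z x)
    (hβ : π s(x, w1) = some β1) (hza : π s(z, w1) = some a)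
    (hax : freeAt π x a) (hyβ : freeAt π y β1) (hzβ : freeAt π z β1)
    (hyz : y ≠ z) (hyw1 : y ≠ w1) : HasType0 G π x y := by
  have hxyne : x ≠ y := hxy.ne
  have hxw1ne : x ≠ w1 := hxw1.ne
  have hzw1ne : z ≠ w1 := hzw1.ne
  have hxz : x ≠ z := hzx.ne'
  have haβ : a ≠ β1 := fun h => hax _ (Sym2.mem_mk_left x w1) (h ▸ hβ)
  have e12 : s(x, y) ≠ s(x, w1) := fun h => hyw1 (Sym2.congr_right.mp h)
  have e13 : s(x, y) ≠ s(z, w1) := sym2_ne_left hxz hxw1ne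
  have e23 : s(x, w1) ≠ s(z, w1) := sym2_ne_left hxz hxw1ne
  set m : Sym2 V → Option (Fin 8) := fun e =>
    if e = s(x, y) then some β1 else if e = s(x, w1) then some a else
      if e = s(z, w1) then some β1 else none with hm
  have mval1 : m s(x, y) = some β1 := by simp [hm]
  have mval2 : m s(x, w1) = some a := by simp [hm, Ne.symm e12]
  have mval3 : m s(z, w1) = some β1 := by simp [hm, Ne.symm e13, Ne.symm e23]
  have minv : ∀ e c, m e = some c →
      (e = s(x, y) ∧ c = β1) ∨ (e = s(x, w1) ∧ c = a) ∨ (e = s(z, w1) ∧ c = β1) := by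
    intro e c h
    by_cases h1 : e = s(x, y)
    · rw [h1, mval1] at h; exact Or.inl ⟨h1, (Option.some.inj h).symm⟩
    · by_cases h2 : e = s(x, w1)
      · rw [h2, mval2] at h; exact Or.inr (Or.inl ⟨h2, (Option.some.inj h).symm⟩)
      · by_cases h3 : e = s(z, w1)
        · rw [h3, mval3] at h; exact Or.inr (Or.inr ⟨h3, (Option.some.inj h).symm⟩)
        · rw [hm] at h
          simp [h1, h2, h3] at h
  refine hasType0_of_patch hπ m ?_ ?_ ?_ ?_ ?_ ?_
  · intro e he
    obtain ⟨c, hc⟩ := Option.ne_none_iff_exists'.mp he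
    rcases minv _ _ hc with ⟨rfl, _⟩ | ⟨rfl, _⟩ | ⟨rfl, _⟩
    exacts [hxy, hxw1, hzw1]
  · intro e he
    obtain ⟨c, hc⟩ := Option.ne_none_iff_exists'.mp he
    rcases minv _ _ hc with ⟨rfl, _⟩ | ⟨rfl, _⟩ | ⟨rfl, _⟩
    exacts [edgeDistLE_self, edgeDistLE_left, edgeDistLE_of_adj hzx]
  · intro e he hne
    obtain ⟨c, hc⟩ := Option.ne_none_iff_exists'.mp he
    rcases minv _ _ hc with ⟨rfl, _⟩ | ⟨rfl, _⟩ | ⟨rfl, _⟩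
    · exact absurd rfl hne
    · rw [hβ]; exact Option.some_ne_none _
    · rw [hza]; exact Option.some_ne_none _
  · rw [mval1]; exact Option.some_ne_none _
  · intro v w w' hne hn heq
    obtain ⟨c, hc⟩ := Option.ne_none_iff_exists'.mp hn
    have hc' : m s(v, w') = some c := by rw [← heq]; exact hc
    rcases minv _ _ hc with ⟨he1, rfl⟩ | ⟨he1, rfl⟩ | ⟨he1, rfl⟩ <;>
      rcases minv _ _ hc' with ⟨he2, hcc⟩ | ⟨he2, hcc⟩ | ⟨he2, hcc⟩
    · exact hne (Sym2.congr_right.mp (he1.trans he2.symm))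
    · exact haβ hcc.symm
    · exact no_share he1 he2 hxz hxw1ne hyz hyw1
    · exact haβ hcc
    · exact hne (Sym2.congr_right.mp (he1.trans he2.symm))
    · exact haβ hcc
    · exact no_share he1 he2 hxz.symm hyz.symm hxw1ne.symm hyw1.symm
    · exact haβ hcc.symm
    · exact hne (Sym2.congr_right.mp (he1.trans he2.symm))
  · intro v w w' c hne hsome hnone
    have n1 : s(v, w') ≠ s(x, y) := by
      intro h; rw [h, mval1] at hnone; exact nomatch hnone
    have n2 : s(v, w') ≠ s(x, w1) := by
      intro h; rw [h, mval2] at hnone; exact nomatch hnone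
    have n3 : s(v, w') ≠ s(z, w1) := by
      intro h; rw [h, mval3] at hnone; exact nomatch hnone
    rcases minv _ _ hsome with ⟨he1, rfl⟩ | ⟨he1, rfl⟩ | ⟨he1, rfl⟩
    · rcases Sym2.eq_iff.mp he1 with ⟨rfl, rfl⟩ | ⟨rfl, rfl⟩
      · exact unique_color hπ hβ (Sym2.mem_mk_left _ _) (Sym2.mem_mk_left _ _) n2
      · exact hyβ _ (Sym2.mem_mk_left _ _)
    · rcases Sym2.eq_iff.mp he1 with ⟨rfl, rfl⟩ | ⟨rfl, rfl⟩
      · exact hax _ (Sym2.mem_mk_left _ _)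
      · exact unique_color hπ hza (Sym2.mem_mk_right _ _) (Sym2.mem_mk_left _ _) n3
    · rcases Sym2.eq_iff.mp he1 with ⟨rfl, rfl⟩ | ⟨rfl, rfl⟩
      · exact hzβ _ (Sym2.mem_mk_left _ _)
      · exact unique_color hπ hβ (Sym2.mem_mk_right _ _) (Sym2.mem_mk_left _ _) n2

/-- The double swap used when `π(xw₁) = π(zw₂) = s₂`, `π(zw₁) = a`, `π(xw₂) = β₂`. -/
lemma type0_swap2 {G : SimpleGraph V} {π : Sym2 V → Option (Fin 8)}
    (hπ : IsProperPEC G 8 π) {x y z w1 w2 : V} {a β2 s2 : Fin 8}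
    (hxy : G.Adj x y) (hxw1 : G.Adj x w1) (hxw2 : G.Adj x w2)
    (hzw1 : G.Adj z w1) (hzw2 : G.Adj z w2) (hzx : G.Adj z x)
    (hβ1 : π s(x, w1) = some s2) (hβ2 : π s(x, w2) = some β2)
    (hza : π s(z, w1) = some a) (hs2 : π s(z, w2) = some s2)
    (hax : freeAt π x a) (hyβ2 : freeAt π y β2) (hzβ2 : freeAt π z β2)
    (hyz : y ≠ z) (hyw1 : y ≠ w1) (hyw2 : y ≠ w2) (hw12 : w1 ≠ w2) :
    HasType0 G π x y := by
  have hxyne : x ≠ y := hxy.ne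
  have hxw1ne : x ≠ w1 := hxw1.ne
  have hxw2ne : x ≠ w2 := hxw2.ne
  have hzw1ne : z ≠ w1 := hzw1.ne
  have hzw2ne : z ≠ w2 := hzw2.ne
  have hxz : x ≠ z := hzx.ne'
  have has2 : a ≠ s2 := fun h => hax _ (Sym2.mem_mk_left x w1) (h ▸ hβ1)
  have haβ2 : a ≠ β2 := fun h => hax _ (Sym2.mem_mk_left x w2) (h ▸ hβ2)
  have hβ2s2 : β2 ≠ s2 := fun h =>
    unique_color hπ hβ1 (Sym2.mem_mk_left x w1) (Sym2.mem_mk_left x w2)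
      (fun hh => hw12 (Sym2.congr_right.mp hh).symm) (h ▸ hβ2)
  have e12 : s(x, y) ≠ s(x, w1) := fun h => hyw1 (Sym2.congr_right.mp h)
  have e13 : s(x, y) ≠ s(x, w2) := fun h => hyw2 (Sym2.congr_right.mp h)
  have e14 : s(x, y) ≠ s(z, w1) := sym2_ne_left hxz hxw1ne
  have e15 : s(x, y) ≠ s(z, w2) := sym2_ne_left hxz hxw2ne
  have e23 : s(x, w1) ≠ s(x, w2) := fun h => hw12 (Sym2.congr_right.mp h)
  have e24 : s(x, w1) ≠ s(z, w1) := sym2_ne_left hxz hxw1ne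
  have e25 : s(x, w1) ≠ s(z, w2) := sym2_ne_left hxz hxw2ne
  have e34 : s(x, w2) ≠ s(z, w1) := sym2_ne_left hxz hxw1ne
  have e35 : s(x, w2) ≠ s(z, w2) := sym2_ne_left hxz hxw2ne
  have e45 : s(z, w1) ≠ s(z, w2) := fun h => hw12 (Sym2.congr_right.mp h)
  set m : Sym2 V → Option (Fin 8) := fun e =>
    if e = s(x, y) then some β2 else if e = s(x, w1) then some a else
      if e = s(x, w2) then some s2 else if e = s(z, w1) then some s2 else
        if e = s(z, w2) then some β2 else none with hm
  have mval1 : m s(x, y) = some β2 := by simp [hm]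
  have mval2 : m s(x, w1) = some a := by simp [hm, Ne.symm e12]
  have mval3 : m s(x, w2) = some s2 := by simp [hm, Ne.symm e13, Ne.symm e23]
  have mval4 : m s(z, w1) = some s2 := by
    simp [hm, Ne.symm e14, Ne.symm e24, Ne.symm e34]
  have mval5 : m s(z, w2) = some β2 := by
    simp [hm, Ne.symm e15, Ne.symm e25, Ne.symm e35, Ne.symm e45]
  have minv : ∀ e c, m e = some c →
      (e = s(x, y) ∧ c = β2) ∨ (e = s(x, w1) ∧ c = a) ∨ (e = s(x, w2) ∧ c = s2) ∨
      (e = s(z, w1) ∧ c = s2) ∨ (e = s(z, w2) ∧ c = β2) := by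
    intro e c h
    by_cases h1 : e = s(x, y)
    · rw [h1, mval1] at h; exact Or.inl ⟨h1, (Option.some.inj h).symm⟩
    by_cases h2 : e = s(x, w1)
    · rw [h2, mval2] at h; exact Or.inr (Or.inl ⟨h2, (Option.some.inj h).symm⟩)
    by_cases h3 : e = s(x, w2)
    · rw [h3, mval3] at h; exact Or.inr (Or.inr (Or.inl ⟨h3, (Option.some.inj h).symm⟩))
    by_cases h4 : e = s(z, w1)
    · rw [h4, mval4] at h
      exact Or.inr (Or.inr (Or.inr (Or.inl ⟨h4, (Option.some.inj h).symm⟩)))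
    by_cases h5 : e = s(z, w2)
    · rw [h5, mval5] at h
      exact Or.inr (Or.inr (Or.inr (Or.inr ⟨h5, (Option.some.inj h).symm⟩)))
    rw [hm] at h
    simp [h1, h2, h3, h4, h5] at h
  refine hasType0_of_patch hπ m ?_ ?_ ?_ ?_ ?_ ?_
  · intro e he
    obtain ⟨c, hc⟩ := Option.ne_none_iff_exists'.mp he
    rcases minv _ _ hc with ⟨rfl, _⟩ | ⟨rfl, _⟩ | ⟨rfl, _⟩ | ⟨rfl, _⟩ | ⟨rfl, _⟩
    exacts [hxy, hxw1, hxw2, hzw1, hzw2]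
  · intro e he
    obtain ⟨c, hc⟩ := Option.ne_none_iff_exists'.mp he
    rcases minv _ _ hc with ⟨rfl, _⟩ | ⟨rfl, _⟩ | ⟨rfl, _⟩ | ⟨rfl, _⟩ | ⟨rfl, _⟩
    exacts [edgeDistLE_self, edgeDistLE_left, edgeDistLE_left,
      edgeDistLE_of_adj hzx, edgeDistLE_of_adj hzx]
  · intro e he hne
    obtain ⟨c, hc⟩ := Option.ne_none_iff_exists'.mp he
    rcases minv _ _ hc with ⟨rfl, _⟩ | ⟨rfl, _⟩ | ⟨rfl, _⟩ | ⟨rfl, _⟩ | ⟨rfl, _⟩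
    · exact absurd rfl hne
    · rw [hβ1]; exact Option.some_ne_none _
    · rw [hβ2]; exact Option.some_ne_none _
    · rw [hza]; exact Option.some_ne_none _
    · rw [hs2]; exact Option.some_ne_none _
  · rw [mval1]; exact Option.some_ne_none _
  · intro v w w' hne hn heq
    obtain ⟨c, hc⟩ := Option.ne_none_iff_exists'.mp hn
    have hc' : m s(v, w') = some c := by rw [← heq]; exact hc
    rcases minv _ _ hc with ⟨he1, rfl⟩ | ⟨he1, rfl⟩ | ⟨he1, rfl⟩ | ⟨he1, rfl⟩ | ⟨he1, rfl⟩ <;>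
      rcases minv _ _ hc' with ⟨he2, hcc⟩ | ⟨he2, hcc⟩ | ⟨he2, hcc⟩ | ⟨he2, hcc⟩ | ⟨he2, hcc⟩
    · exact hne (Sym2.congr_right.mp (he1.trans he2.symm))
    · exact (by first | exact haβ2 hcc | exact haβ2 hcc.symm | exact has2 hcc | exact has2 hcc.symm | exact hβ2s2 hcc | exact hβ2s2 hcc.symm : False)
    · exact (by first | exact haβ2 hcc | exact haβ2 hcc.symm | exact has2 hcc | exact has2 hcc.symm | exact hβ2s2 hcc | exact hβ2s2 hcc.symm : False)
    · exact (by first | exact haβ2 hcc | exact haβ2 hcc.symm | exact has2 hcc | exact has2 hcc.symm | exact hβ2s2 hcc | exact hβ2s2 hcc.symm : False)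
    · exact no_share he1 he2 hxz hxw2ne hyz hyw2
    · exact (by first | exact haβ2 hcc | exact haβ2 hcc.symm | exact has2 hcc | exact has2 hcc.symm | exact hβ2s2 hcc | exact hβ2s2 hcc.symm : False)
    · exact hne (Sym2.congr_right.mp (he1.trans he2.symm))
    · exact (by first | exact haβ2 hcc | exact haβ2 hcc.symm | exact has2 hcc | exact has2 hcc.symm | exact hβ2s2 hcc | exact hβ2s2 hcc.symm : False)
    · exact (by first | exact haβ2 hcc | exact haβ2 hcc.symm | exact has2 hcc | exact has2 hcc.symm | exact hβ2s2 hcc | exact hβ2s2 hcc.symm : False)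
    · exact (by first | exact haβ2 hcc | exact haβ2 hcc.symm | exact has2 hcc | exact has2 hcc.symm | exact hβ2s2 hcc | exact hβ2s2 hcc.symm : False)
    · exact (by first | exact haβ2 hcc | exact haβ2 hcc.symm | exact has2 hcc | exact has2 hcc.symm | exact hβ2s2 hcc | exact hβ2s2 hcc.symm : False)
    · exact (by first | exact haβ2 hcc | exact haβ2 hcc.symm | exact has2 hcc | exact has2 hcc.symm | exact hβ2s2 hcc | exact hβ2s2 hcc.symm : False)
    · exact hne (Sym2.congr_right.mp (he1.trans he2.symm))
    · exact no_share he1 he2 hxz hxw1ne (Ne.symm hzw2ne) (Ne.symm hw12)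
    · exact (by first | exact haβ2 hcc | exact haβ2 hcc.symm | exact has2 hcc | exact has2 hcc.symm | exact hβ2s2 hcc | exact hβ2s2 hcc.symm : False)
    · exact (by first | exact haβ2 hcc | exact haβ2 hcc.symm | exact has2 hcc | exact has2 hcc.symm | exact hβ2s2 hcc | exact hβ2s2 hcc.symm : False)
    · exact (by first | exact haβ2 hcc | exact haβ2 hcc.symm | exact has2 hcc | exact has2 hcc.symm | exact hβ2s2 hcc | exact hβ2s2 hcc.symm : False)
    · exact no_share he1 he2 hxz.symm hzw2ne hxw1ne.symm hw12
    · exact hne (Sym2.congr_right.mp (he1.trans he2.symm))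
    · exact (by first | exact haβ2 hcc | exact haβ2 hcc.symm | exact has2 hcc | exact has2 hcc.symm | exact hβ2s2 hcc | exact hβ2s2 hcc.symm : False)
    · exact no_share he1 he2 hxz.symm hyz.symm hxw2ne.symm hyw2.symm
    · exact (by first | exact haβ2 hcc | exact haβ2 hcc.symm | exact has2 hcc | exact has2 hcc.symm | exact hβ2s2 hcc | exact hβ2s2 hcc.symm : False)
    · exact (by first | exact haβ2 hcc | exact haβ2 hcc.symm | exact has2 hcc | exact has2 hcc.symm | exact hβ2s2 hcc | exact hβ2s2 hcc.symm : False)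
    · exact (by first | exact haβ2 hcc | exact haβ2 hcc.symm | exact has2 hcc | exact has2 hcc.symm | exact hβ2s2 hcc | exact hβ2s2 hcc.symm : False)
    · exact hne (Sym2.congr_right.mp (he1.trans he2.symm))
  · intro v w w' c hne hsome hnone
    have n1 : s(v, w') ≠ s(x, y) := by
      intro h; rw [h, mval1] at hnone; exact nomatch hnone
    have n2 : s(v, w') ≠ s(x, w1) := by
      intro h; rw [h, mval2] at hnone; exact nomatch hnone
    have n3 : s(v, w') ≠ s(x, w2) := by
      intro h; rw [h, mval3] at hnone; exact nomatch hnone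
    have n4 : s(v, w') ≠ s(z, w1) := by
      intro h; rw [h, mval4] at hnone; exact nomatch hnone
    have n5 : s(v, w') ≠ s(z, w2) := by
      intro h; rw [h, mval5] at hnone; exact nomatch hnone
    rcases minv _ _ hsome with ⟨he1, rfl⟩ | ⟨he1, rfl⟩ | ⟨he1, rfl⟩ | ⟨he1, rfl⟩ | ⟨he1, rfl⟩
    · rcases Sym2.eq_iff.mp he1 with ⟨rfl, rfl⟩ | ⟨rfl, rfl⟩
      · exact unique_color hπ hβ2 (Sym2.mem_mk_left _ _) (Sym2.mem_mk_left _ _) n3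
      · exact hyβ2 _ (Sym2.mem_mk_left _ _)
    · rcases Sym2.eq_iff.mp he1 with ⟨rfl, rfl⟩ | ⟨rfl, rfl⟩
      · exact hax _ (Sym2.mem_mk_left _ _)
      · exact unique_color hπ hza (Sym2.mem_mk_right _ _) (Sym2.mem_mk_left _ _) n4
    · rcases Sym2.eq_iff.mp he1 with ⟨rfl, rfl⟩ | ⟨rfl, rfl⟩
      · exact unique_color hπ hβ1 (Sym2.mem_mk_left _ _) (Sym2.mem_mk_left _ _) n2
      · exact unique_color hπ hs2 (Sym2.mem_mk_right _ _) (Sym2.mem_mk_left _ _) n5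
    · rcases Sym2.eq_iff.mp he1 with ⟨rfl, rfl⟩ | ⟨rfl, rfl⟩
      · exact unique_color hπ hs2 (Sym2.mem_mk_left _ _) (Sym2.mem_mk_left _ _) n5
      · exact unique_color hπ hβ1 (Sym2.mem_mk_right _ _) (Sym2.mem_mk_left _ _) n2
    · rcases Sym2.eq_iff.mp he1 with ⟨rfl, rfl⟩ | ⟨rfl, rfl⟩
      · exact hzβ2 _ (Sym2.mem_mk_left _ _)
      · exact unique_color hπ hβ2 (Sym2.mem_mk_right _ _) (Sym2.mem_mk_left _ _) n3

end Stmt9Aux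

namespace Stmt9Aux
variable {V : Type} [DecidableEq V]

abbrev Mid (G : SimpleGraph V) (π : Sym2 V → Option (Fin 8)) (x y : V) : Prop :=
  ∃ a b : Fin 8, a ≠ b ∧
    (HasType1 π x y a b ∨ HasType2 G π x y a b ∨ HasType3 G π x y a b ∨
      HasType4 G π x y a b ∨ HasType5 G π x y a b)

abbrev Rt (G : SimpleGraph V) (π : Sym2 V → Option (Fin 8)) (x y : V) : Prop :=
  ∃ a b c d : Fin 8, a ≠ b ∧ a ≠ c ∧ a ≠ d ∧ b ≠ c ∧ b ≠ d ∧ c ≠ d ∧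
    HasType6 G π x y a b c d

abbrev Concl (G : SimpleGraph V) (π : Sym2 V → Option (Fin 8)) (x y : V) : Prop :=
  HasType0 G π x y ∨ Mid G π x y ∨ Rt G π x y

/-- Type 1 or Type 5 via the degree-3 vertex `z` and the vertex `w1`. -/
lemma keyT5 {G : SimpleGraph V} {π : Sym2 V → Option (Fin 8)} (hπ : IsProperPEC G 8 π)
    {x y z w1 : V} {a s1 β1 : Fin 8}
    (hxy : G.Adj x y) (hxw1 : G.Adj x w1) (hzw1 : G.Adj z w1)
    (hzx : z ≠ x) (hzy : z ≠ y) (hw1x : w1 ≠ x) (hw1y : w1 ≠ y)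
    (hax : freeAt π x a) (hys1 : freeAt π y s1) (hyβ : freeAt π y β1)
    (hza : freeAt π z a) (hzβ : freeAt π z β1)
    (hβ : π s(x, w1) = some β1) (hs : π s(z, w1) = some s1)
    (has1 : a ≠ s1) : Mid G π x y := by
  have hβs1 : β1 ≠ s1 := by
    intro h
    exact unique_color hπ hs (Sym2.mem_mk_right z w1) (Sym2.mem_mk_right x w1)
      (sym2_ne_left hzx.symm hw1x.symm) (h ▸ hβ)
  by_cases hr : chainReach π a s1 x y
  · refine ⟨s1, a, Ne.symm has1, Or.inr (Or.inr (Or.inr (Or.inr ?_)))⟩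
    exact ⟨hys1, hax, ⟨hxy.ne, chainReach_comm hr, endpoint_right hπ hax,
      endpoint_left hπ hys1⟩, β1, hβs1, hyβ, z, w1, hzw1.ne, hzx, hzy, hw1x, hw1y,
      hxw1, hzw1, hβ, hs, hza, hzβ⟩
  · exact ⟨a, s1, has1, Or.inl ⟨hax, hys1, fun hh => hr hh.1⟩⟩

/-- The crossing case: Type 1, 2 or 6. -/
lemma keyT6 {G : SimpleGraph V} {π : Sym2 V → Option (Fin 8)} (hπ : IsProperPEC G 8 π)
    {x y z w1 w2 u1 : V} {a c0 s1 s2 α1 : Fin 8}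
    (hxy : G.Adj x y) (hxu1 : G.Adj x u1) (hyu1 : G.Adj y u1)
    (hxw1 : G.Adj x w1) (hxw2 : G.Adj x w2) (hzw1 : G.Adj z w1) (hzw2 : G.Adj z w2)
    (hzx : z ≠ x) (hzy : z ≠ y) (hw1x : w1 ≠ x) (hw1y : w1 ≠ y)
    (hw2x : w2 ≠ x) (hw2y : w2 ≠ y) (hw12 : w1 ≠ w2)
    (hax : freeAt π x a)
    (hfy : ∀ γ, γ ≠ a → γ ≠ c0 → freeAt π y γ)
    (hfz : ∀ γ, γ ≠ c0 → γ ≠ s1 → γ ≠ s2 → freeAt π z γ)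
    (hxw1c : π s(x, w1) = some s2) (hxw2c : π s(x, w2) = some s1)
    (hzw1c : π s(z, w1) = some s1) (hzw2c : π s(z, w2) = some s2)
    (hyu1c : π s(y, u1) = some a) (hxu1c : π s(x, u1) = some α1)
    (has1 : a ≠ s1) (has2 : a ≠ s2) (hac0 : a ≠ c0)
    (hs12 : s1 ≠ s2) (hs1c0 : s1 ≠ c0) (hs2c0 : s2 ≠ c0)
    (hα1a : α1 ≠ a) (hα1c0 : α1 ≠ c0) : Mid G π x y ∨ Rt G π x y := by
  have hys1 : freeAt π y s1 := hfy s1 (Ne.symm has1) hs1c0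
  have hys2 : freeAt π y s2 := hfy s2 (Ne.symm has2) hs2c0
  have hza : freeAt π z a := hfz a hac0 has1 has2
  by_cases hr1 : chainReach π a s1 x y
  swap
  · exact Or.inl ⟨a, s1, has1, Or.inl ⟨hax, hys1, fun hh => hr1 hh.1⟩⟩
  by_cases hr2 : chainReach π a s2 x y
  swap
  · exact Or.inl ⟨a, s2, has2, Or.inl ⟨hax, hys2, fun hh => hr2 hh.1⟩⟩
  have cpe1 : chainPathEndpoints π s1 a x y :=
    ⟨hxy.ne, chainReach_comm hr1, endpoint_right hπ hax, endpoint_left hπ hys1⟩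
  have cpe2 : chainPathEndpoints π s2 a x y :=
    ⟨hxy.ne, chainReach_comm hr2, endpoint_right hπ hax, endpoint_left hπ hys2⟩
  by_cases hα1s1 : α1 = s1
  · obtain ⟨d, hd⟩ := exists_fresh {c0, s1, s2, a, a} (card5 _ _ _ _ _)
    simp only [Finset.mem_insert, Finset.mem_singleton] at hd
    push_neg at hd
    obtain ⟨hdc0, hds1, hds2, hda, -⟩ := hd
    have hyd : freeAt π y d := hfy d hda hdc0
    have hzd : freeAt π z d := hfz d hdc0 hds1 hds2
    by_cases hcyc : inChainCycle π s1 d x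
    · refine Or.inr ⟨s2, a, s1, d, Ne.symm has2, Ne.symm hs12, Ne.symm hds2, has1,
        Ne.symm hda, Ne.symm hds1, ?_⟩
      exact ⟨hys2, hys1, hyd, hax, cpe2, hcyc, z, w2, w1, hzw2.ne, hzw1.ne, Ne.symm hw12,
        hzx, hzy, hw2x, hw2y, hw1x, hw1y, hxw2, hxw1, hzw2, hzw1,
        hxw2c, hxw1c, hzw2c, hzw1c, hza, hzd⟩
    · refine Or.inl ⟨s1, d, Ne.symm hds1, Or.inr (Or.inl ?_)⟩
      exact ⟨hys1, hyd, a, Ne.symm hda, hax, u1, hxu1, hyu1, hyu1c,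
        (by rw [hxu1c, hα1s1]), hcyc⟩
  by_cases hα1s2 : α1 = s2
  · obtain ⟨d, hd⟩ := exists_fresh {c0, s1, s2, a, a} (card5 _ _ _ _ _)
    simp only [Finset.mem_insert, Finset.mem_singleton] at hd
    push_neg at hd
    obtain ⟨hdc0, hds1, hds2, hda, -⟩ := hd
    have hyd : freeAt π y d := hfy d hda hdc0
    have hzd : freeAt π z d := hfz d hdc0 hds1 hds2
    by_cases hcyc : inChainCycle π s2 d x
    · refine Or.inr ⟨s1, a, s2, d, Ne.symm has1, hs12, Ne.symm hds1, has2,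
        Ne.symm hda, Ne.symm hds2, ?_⟩
      exact ⟨hys1, hys2, hyd, hax, cpe1, hcyc, z, w1, w2, hzw1.ne, hzw2.ne, hw12,
        hzx, hzy, hw1x, hw1y, hw2x, hw2y, hxw1, hxw2, hzw1, hzw2,
        hxw1c, hxw2c, hzw1c, hzw2c, hza, hzd⟩
    · refine Or.inl ⟨s2, d, Ne.symm hds2, Or.inr (Or.inl ?_)⟩
      exact ⟨hys2, hyd, a, Ne.symm hda, hax, u1, hxu1, hyu1, hyu1c,
        (by rw [hxu1c, hα1s2]), hcyc⟩
  · have hyα1 : freeAt π y α1 := hfy α1 hα1a hα1c0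
    have hzα1 : freeAt π z α1 := hfz α1 hα1c0 hα1s1 hα1s2
    by_cases hcyc : inChainCycle π s2 α1 x
    · refine Or.inr ⟨s1, a, s2, α1, Ne.symm has1, hs12, Ne.symm hα1s1, has2,
        Ne.symm hα1a, Ne.symm hα1s2, ?_⟩
      exact ⟨hys1, hys2, hyα1, hax, cpe1, hcyc, z, w1, w2, hzw1.ne, hzw2.ne, hw12,
        hzx, hzy, hw1x, hw1y, hw2x, hw2y, hxw1, hxw2, hzw1, hzw2,
        hxw1c, hxw2c, hzw1c, hzw2c, hza, hzα1⟩
    · refine Or.inl ⟨α1, s2, hα1s2, Or.inr (Or.inl ?_)⟩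
      exact ⟨hyα1, hys2, a, has2, hax, u1, hxu1, hyu1, hyu1c, hxu1c,
        fun h => hcyc (inChainCycle_comm.mp h)⟩

/-- Case B2ii: the free color of `x` appears at `z`; a local swap recoloring works. -/
lemma keyB2ii {G : SimpleGraph V} {π : Sym2 V → Option (Fin 8)} (hπ : IsProperPEC G 8 π)
    {x y z w1 w2 : V} {a c0 s2 β1 β2 : Fin 8}
    (hxy : G.Adj x y) (hxz : G.Adj x z) (hxw1 : G.Adj x w1) (hxw2 : G.Adj x w2)
    (hzw1 : G.Adj z w1) (hzw2 : G.Adj z w2)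
    (hyz : y ≠ z) (hyw1 : y ≠ w1) (hyw2 : y ≠ w2) (hw12 : w1 ≠ w2)
    (hax : freeAt π x a)
    (hfy : ∀ γ, γ ≠ a → γ ≠ c0 → freeAt π y γ)
    (hfz : ∀ γ, γ ≠ c0 → γ ≠ a → γ ≠ s2 → freeAt π z γ)
    (hc0 : π s(x, z) = some c0)
    (hza : π s(z, w1) = some a) (hs2 : π s(z, w2) = some s2)
    (hβ1 : π s(x, w1) = some β1) (hβ2 : π s(x, w2) = some β2) : HasType0 G π x y := by
  have hxzne : x ≠ z := hxz.ne
  have hβ1a : β1 ≠ a := fun h => hax _ (Sym2.mem_mk_left x w1) (h ▸ hβ1)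
  have hβ1c0 : β1 ≠ c0 := by
    intro h
    exact unique_color hπ hc0 (Sym2.mem_mk_left x z) (Sym2.mem_mk_left x w1)
      (fun hh => (hzw1.ne.symm) (Sym2.congr_right.mp hh)) (h ▸ hβ1)
  by_cases hβ1s2 : β1 = s2
  · -- double swap
    have hβ2a : β2 ≠ a := fun h => hax _ (Sym2.mem_mk_left x w2) (h ▸ hβ2)
    have hβ2c0 : β2 ≠ c0 := by
      intro h
      exact unique_color hπ hc0 (Sym2.mem_mk_left x z) (Sym2.mem_mk_left x w2)
        (fun hh => (hzw2.ne.symm) (Sym2.congr_right.mp hh)) (h ▸ hβ2)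
    have hβ2s2 : β2 ≠ s2 := by
      intro h
      exact unique_color hπ hs2 (Sym2.mem_mk_right z w2) (Sym2.mem_mk_right x w2)
        (sym2_ne_left hxzne hxw2.ne) (h ▸ hβ2)
    have hyβ2 : freeAt π y β2 := hfy β2 hβ2a hβ2c0
    have hzβ2 : freeAt π z β2 := hfz β2 hβ2c0 hβ2a hβ2s2
    exact type0_swap2 hπ hxy hxw1 hxw2 hzw1 hzw2 hxz.symm (hβ1s2 ▸ hβ1) hβ2 hza hs2
      hax hyβ2 hzβ2 hyz hyw1 hyw2 hw12
  · -- single swap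
    have hyβ1 : freeAt π y β1 := hfy β1 hβ1a hβ1c0
    have hzβ1 : freeAt π z β1 := hfz β1 hβ1c0 hβ1a hβ1s2
    exact type0_swap1 hπ hxy hxw1 hzw1 hxz.symm hβ1 hza hax hyβ1 hzβ1 hyz hyw1

end Stmt9Aux

namespace Stmt9Aux
variable {V : Type} [Fintype V] [DecidableEq V]

lemma keyB {G : SimpleGraph V} [DecidableRel G.Adj] {π : Sym2 V → Option (Fin 8)}
    (hπ : IsProperPEC G 8 π) {x y z w1 w2 u1 u2 : V} {a : Fin 8}
    (hxy : G.Adj x y) (hxz : G.Adj x z) (hxw1 : G.Adj x w1) (hxw2 : G.Adj x w2)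
    (hxu1 : G.Adj x u1) (hxu2 : G.Adj x u2) (hyu1 : G.Adj y u1) (hyu2 : G.Adj y u2)
    (hzw1 : G.Adj z w1) (hzw2 : G.Adj z w2)
    (hyz : y ≠ z) (hyw1 : y ≠ w1) (hyw2 : y ≠ w2) (hw12 : w1 ≠ w2)
    (hu12 : u1 ≠ u2) (hu1z : u1 ≠ z)
    (hNy : G.neighborFinset y = {x, u1, u2}) (hNz : G.neighborFinset z = {x, w1, w2})
    (huncol : π s(x, y) = none)
    (hcol : ∀ e ∈ G.edgeSet, e ≠ s(x, y) → edgeDistLE G 1 e s(x, y) → π e ≠ none)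
    (hax : freeAt π x a) (hyu1a : π s(y, u1) = some a) : Concl G π x y := by
  have hxzne : x ≠ z := hxz.ne
  -- colored edges around x and z
  obtain ⟨c0, hc0⟩ := Option.ne_none_iff_exists'.mp <| hcol s(x, z)
    ((SimpleGraph.mem_edgeSet G).2 hxz)
    (fun h => hyz (Sym2.congr_right.mp h).symm) edgeDistLE_left
  obtain ⟨q, hq⟩ := Option.ne_none_iff_exists'.mp <| hcol s(y, u2)
    ((SimpleGraph.mem_edgeSet G).2 hyu2)
    (by
      intro h
      rw [Sym2.eq_iff] at h
      rcases h with ⟨h1, _⟩ | ⟨_, h2⟩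
      exacts [hxy.ne' h1, hxu2.ne' h2]) edgeDistLE_yleft
  obtain ⟨s1, hs1⟩ := Option.ne_none_iff_exists'.mp <| hcol s(z, w1)
    ((SimpleGraph.mem_edgeSet G).2 hzw1)
    (sym2_ne_left hxz.ne' hyz.symm) (edgeDistLE_of_adj hxz.symm)
  obtain ⟨s2, hs2c⟩ := Option.ne_none_iff_exists'.mp <| hcol s(z, w2)
    ((SimpleGraph.mem_edgeSet G).2 hzw2)
    (sym2_ne_left hxz.ne' hyz.symm) (edgeDistLE_of_adj hxz.symm)
  obtain ⟨β1, hβ1c⟩ := Option.ne_none_iff_exists'.mp <| hcol s(x, w1)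
    ((SimpleGraph.mem_edgeSet G).2 hxw1)
    (fun h => hyw1 (Sym2.congr_right.mp h).symm) edgeDistLE_left
  obtain ⟨β2, hβ2c⟩ := Option.ne_none_iff_exists'.mp <| hcol s(x, w2)
    ((SimpleGraph.mem_edgeSet G).2 hxw2)
    (fun h => hyw2 (Sym2.congr_right.mp h).symm) edgeDistLE_left
  -- basic color facts
  have hqa : q ≠ a := fun h => unique_color hπ hyu1a (Sym2.mem_mk_left y u1)
    (Sym2.mem_mk_left y u2) (fun hh => hu12.symm (Sym2.congr_right.mp hh)) (h ▸ hq)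
  have hac0 : a ≠ c0 := fun h => hax _ (Sym2.mem_mk_left x z) (h ▸ hc0)
  have hc0z : π s(z, x) = some c0 := by
    rw [show s(z, x) = s(x, z) from Sym2.eq_swap]; exact hc0
  have hs1c0 : s1 ≠ c0 := fun h => unique_color hπ hc0z (Sym2.mem_mk_left z x)
    (Sym2.mem_mk_left z w1) (fun hh => hxw1.ne' (Sym2.congr_right.mp hh)) (h ▸ hs1)
  have hs2c0 : s2 ≠ c0 := fun h => unique_color hπ hc0z (Sym2.mem_mk_left z x)
    (Sym2.mem_mk_left z w2) (fun hh => hxw2.ne' (Sym2.congr_right.mp hh)) (h ▸ hs2c)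
  have hs12 : s1 ≠ s2 := fun h => unique_color hπ hs2c (Sym2.mem_mk_left z w2)
    (Sym2.mem_mk_left z w1) (fun hh => hw12 (Sym2.congr_right.mp hh)) (h ▸ hs1)
  -- free color characterizations at y and z
  have hfy : ∀ γ, γ ≠ a → γ ≠ q → freeAt π y γ := by
    intro γ h1 h2
    refine freeAt_of_nbrs hπ hNy ?_ ?_ ?_
    · intro hh
      rw [show s(y, x) = s(x, y) from Sym2.eq_swap, huncol] at hh
      exact nomatch hh
    · intro hh
      rw [hyu1a] at hh
      exact h1 (Option.some.inj hh).symm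
    · intro hh
      rw [hq] at hh
      exact h2 (Option.some.inj hh).symm
  have hfz : ∀ γ, γ ≠ c0 → γ ≠ s1 → γ ≠ s2 → freeAt π z γ := by
    intro γ h1 h2 h3
    refine freeAt_of_nbrs hπ hNz ?_ ?_ ?_
    · intro hh
      rw [hc0z] at hh
      exact h1 (Option.some.inj hh).symm
    · intro hh
      rw [hs1] at hh
      exact h2 (Option.some.inj hh).symm
    · intro hh
      rw [hs2c] at hh
      exact h3 (Option.some.inj hh).symm
  by_cases hqc0 : q = c0
  · -- Case B2 : the colors at y are exactly a and c0
    have hfy2 : ∀ γ, γ ≠ a → γ ≠ c0 → freeAt π y γ := fun γ h1 h2 =>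
      hfy γ h1 (by rw [hqc0]; exact h2)
    by_cases has1 : a = s1
    · -- B2ii with (w1, w2)
      have hfz' : ∀ γ, γ ≠ c0 → γ ≠ a → γ ≠ s2 → freeAt π z γ := fun γ h1 h2 h3 =>
        hfz γ h1 (has1 ▸ h2) h3
      exact Or.inl (keyB2ii hπ hxy hxz hxw1 hxw2 hzw1 hzw2 hyz hyw1 hyw2 hw12 hax hfy2
        hfz' hc0 (by rw [has1]; exact hs1) hs2c hβ1c hβ2c)
    by_cases has2 : a = s2
    · -- B2ii with (w2, w1)
      have hfz' : ∀ γ, γ ≠ c0 → γ ≠ a → γ ≠ s1 → freeAt π z γ := fun γ h1 h2 h3 =>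
        hfz γ h1 h3 (has2 ▸ h2)
      exact Or.inl (keyB2ii hπ hxy hxz hxw2 hxw1 hzw2 hzw1 hyz hyw2 hyw1 hw12.symm hax
        hfy2 hfz' hc0 (by rw [has2]; exact hs2c) hs1 hβ2c hβ1c)
    -- B2i : a ∉ {s1, s2}.
    have hβ1a : β1 ≠ a := fun h => hax _ (Sym2.mem_mk_left x w1) (h ▸ hβ1c)
    have hβ2a : β2 ≠ a := fun h => hax _ (Sym2.mem_mk_left x w2) (h ▸ hβ2c)
    have hβ1c0 : β1 ≠ c0 := fun h => unique_color hπ hc0 (Sym2.mem_mk_left x z)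
      (Sym2.mem_mk_left x w1) (fun hh => hzw1.ne' (Sym2.congr_right.mp hh)) (h ▸ hβ1c)
    have hβ2c0 : β2 ≠ c0 := fun h => unique_color hπ hc0 (Sym2.mem_mk_left x z)
      (Sym2.mem_mk_left x w2) (fun hh => hzw2.ne' (Sym2.congr_right.mp hh)) (h ▸ hβ2c)
    have hβ1s1 : β1 ≠ s1 := fun h => unique_color hπ hs1 (Sym2.mem_mk_right z w1)
      (Sym2.mem_mk_right x w1) (sym2_ne_left hxzne hxw1.ne) (h ▸ hβ1c)
    have hβ2s2 : β2 ≠ s2 := fun h => unique_color hπ hs2c (Sym2.mem_mk_right z w2)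
      (Sym2.mem_mk_right x w2) (sym2_ne_left hxzne hxw2.ne) (h ▸ hβ2c)
    have hza' : freeAt π z a := hfz a hac0 has1 has2
    by_cases hb1 : β1 = s2
    · by_cases hb2 : β2 = s1
      · -- the crossing case
        obtain ⟨α1, hα1c⟩ := Option.ne_none_iff_exists'.mp <| hcol s(x, u1)
          ((SimpleGraph.mem_edgeSet G).2 hxu1)
          (fun h => hyu1.ne' (Sym2.congr_right.mp h)) edgeDistLE_left
        have hα1a : α1 ≠ a := fun h => hax _ (Sym2.mem_mk_left x u1) (h ▸ hα1c)
        have hα1c0 : α1 ≠ c0 := fun h => unique_color hπ hc0 (Sym2.mem_mk_left x z)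
          (Sym2.mem_mk_left x u1) (fun hh => hu1z (Sym2.congr_right.mp hh)) (h ▸ hα1c)
        rcases keyT6 hπ hxy hxu1 hyu1 hxw1 hxw2 hzw1 hzw2 hxz.ne' hyz.symm hxw1.ne'
          hyw1.symm hxw2.ne' hyw2.symm hw12 hax hfy2 hfz
          (by rw [← hb1]; exact hβ1c) (by rw [← hb2]; exact hβ2c) hs1 hs2c hyu1a hα1c
          has1 has2 hac0 hs12 hs1c0 hs2c0 hα1a hα1c0 with hm | hm
        exacts [Or.inr (Or.inl hm), Or.inr (Or.inr hm)]
      · -- Type 5 via w2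
        have hys2 : freeAt π y s2 := hfy2 s2 (Ne.symm has2) hs2c0
        have hyβ2 : freeAt π y β2 := hfy2 β2 hβ2a hβ2c0
        have hzβ2 : freeAt π z β2 := hfz β2 hβ2c0 hb2 hβ2s2
        exact Or.inr (Or.inl (keyT5 hπ hxy hxw2 hzw2 hxz.ne' hyz.symm hxw2.ne' hyw2.symm
          hax hys2 hyβ2 hza' hzβ2 hβ2c hs2c has2))
    · -- Type 5 via w1
      have hys1 : freeAt π y s1 := hfy2 s1 (Ne.symm has1) hs1c0
      have hyβ1 : freeAt π y β1 := hfy2 β1 hβ1a hβ1c0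
      have hzβ1 : freeAt π z β1 := hfz β1 hβ1c0 hβ1s1 hb1
      exact Or.inr (Or.inl (keyT5 hπ hxy hxw1 hzw1 hxz.ne' hyz.symm hxw1.ne' hyw1.symm
        hax hys1 hyβ1 hza' hzβ1 hβ1c hs1 has1))
  · -- Case B1 : c0 is free at y; Type 1 or Type 3
    have hyc0 : freeAt π y c0 := hfy c0 (Ne.symm hac0) (fun h => hqc0 h.symm)
    obtain ⟨b, hb⟩ := exists_fresh {a, q, c0, s1, s2} (card5 _ _ _ _ _)
    simp only [Finset.mem_insert, Finset.mem_singleton] at hb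
    push_neg at hb
    obtain ⟨hba, hbq, hbc0, hbs1, hbs2⟩ := hb
    have hyb : freeAt π y b := hfy b hba hbq
    have hzb : freeAt π z b := hfz b hbc0 hbs1 hbs2
    by_cases hr : chainReach π a b x y
    · exact Or.inr (Or.inl ⟨a, b, Ne.symm hba, Or.inr (Or.inr (Or.inl ⟨hax, hyb,
        ⟨hxy.ne, hr, endpoint_left hπ hax, endpoint_right hπ hyb⟩, c0, Ne.symm hbc0,
        hyc0, z, hxz, hzb, hc0⟩))⟩)
    · exact Or.inr (Or.inl ⟨a, b, Ne.symm hba, Or.inl ⟨hax, hyb, fun hh => hr hh.1⟩⟩)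

lemma key {G : SimpleGraph V} [DecidableRel G.Adj] (hΔ : G.maxDegree ≤ 8)
    {π : Sym2 V → Option (Fin 8)} (hπ : IsProperPEC G 8 π) {x y z w1 w2 u1 u2 : V}
    (hxy : G.Adj x y) (hxz : G.Adj x z) (hxw1 : G.Adj x w1) (hxw2 : G.Adj x w2)
    (hxu1 : G.Adj x u1) (hxu2 : G.Adj x u2) (hyu1 : G.Adj y u1) (hyu2 : G.Adj y u2)
    (hzw1 : G.Adj z w1) (hzw2 : G.Adj z w2)
    (hyz : y ≠ z) (hyw1 : y ≠ w1) (hyw2 : y ≠ w2) (hw12 : w1 ≠ w2)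
    (hu12 : u1 ≠ u2) (hu1z : u1 ≠ z) (hu2z : u2 ≠ z)
    (hNy : G.neighborFinset y = {x, u1, u2}) (hNz : G.neighborFinset z = {x, w1, w2})
    (huncol : π s(x, y) = none)
    (hcol : ∀ e ∈ G.edgeSet, e ≠ s(x, y) → edgeDistLE G 1 e s(x, y) → π e ≠ none) :
    Concl G π x y := by
  obtain ⟨a, hax⟩ := exists_free hΔ hπ hxy huncol
  obtain ⟨p, hp⟩ := Option.ne_none_iff_exists'.mp <| hcol s(y, u1)
    ((SimpleGraph.mem_edgeSet G).2 hyu1)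
    (by
      intro h
      rw [Sym2.eq_iff] at h
      rcases h with ⟨h1, _⟩ | ⟨_, h2⟩
      exacts [hxy.ne' h1, hxu1.ne' h2]) edgeDistLE_yleft
  obtain ⟨q, hq⟩ := Option.ne_none_iff_exists'.mp <| hcol s(y, u2)
    ((SimpleGraph.mem_edgeSet G).2 hyu2)
    (by
      intro h
      rw [Sym2.eq_iff] at h
      rcases h with ⟨h1, _⟩ | ⟨_, h2⟩
      exacts [hxy.ne' h1, hxu2.ne' h2]) edgeDistLE_yleft
  by_cases h1 : p = a
  · exact keyB hπ hxy hxz hxw1 hxw2 hxu1 hxu2 hyu1 hyu2 hzw1 hzw2 hyz hyw1 hyw2 hw12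
      hu12 hu1z hNy hNz huncol hcol hax (by rw [← h1]; exact hp)
  by_cases h2 : q = a
  · have hNy' : G.neighborFinset y = {x, u2, u1} := by
      rw [hNy]
      exact congrArg (insert x) (Finset.pair_comm u1 u2)
    exact keyB hπ hxy hxz hxw1 hxw2 hxu2 hxu1 hyu2 hyu1 hzw1 hzw2 hyz hyw1 hyw2 hw12
      hu12.symm hu2z hNy' hNz huncol hcol hax (by rw [← h2]; exact hq)
  · have hya : freeAt π y a := by
      refine freeAt_of_nbrs hπ hNy ?_ ?_ ?_
      · intro hh
        rw [show s(y, x) = s(x, y) from Sym2.eq_swap, huncol] at hh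
        exact nomatch hh
      · intro hh
        rw [hp] at hh
        exact h1 (Option.some.inj hh)
      · intro hh
        rw [hq] at hh
        exact h2 (Option.some.inj hh)
    exact Or.inl (type0_color hπ hxy hax hya)

end Stmt9Aux

namespace Stmt9Aux
variable {V : Type} [Fintype V] [DecidableEq V]

lemma nbrs_eq {G : SimpleGraph V} [DecidableRel G.Adj] {v a b c : V}
    (hdeg : G.degree v = 3) (h1 : G.Adj v a) (h2 : G.Adj v b) (h3 : G.Adj v c)
    (hab : a ≠ b) (hac : a ≠ c) (hbc : b ≠ c) : G.neighborFinset v = {a, b, c} := by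
  have hsub : ({a, b, c} : Finset V) ⊆ G.neighborFinset v := by
    intro t ht
    simp only [Finset.mem_insert, Finset.mem_singleton] at ht
    rcases ht with rfl | rfl | rfl <;> rw [SimpleGraph.mem_neighborFinset]
    exacts [h1, h2, h3]
  have hcard : ({a, b, c} : Finset V).card = 3 := by
    rw [Finset.card_insert_of_notMem (by simp [hab, hac]),
      Finset.card_insert_of_notMem (by simp [hbc]), Finset.card_singleton]
  have hd : (G.neighborFinset v).card = 3 := hdeg
  exact (Finset.eq_of_subset_of_card_le hsub (by omega)).symm

end Stmt9Aux

open Stmt9Aux in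
/-- Every uncolored butterfly-like edge whose surrounding edges (at distance at most 1) are
all colored has at least one of the types `0`, `1_{ab}`, `2_{ab}`, `3_{ab}`, `4_{ab}`,
`5_{ab}`, `6_{abcd}` for some pairwise distinct colors `a`, `b`, `c`, `d`. -/
theorem stmt9 {V : Type} [Fintype V] [DecidableEq V] (G : SimpleGraph V) [DecidableRel G.Adj]
    (hΔ : G.maxDegree ≤ 8) (π : Sym2 V → Option (Fin 8)) (hπ : IsProperPEC G 8 π)
    (x y : V) (hbf : IsButterflyLikeAt G x y) (huncol : π s(x, y) = none)
    (hcol : ∀ e ∈ G.edgeSet, e ≠ s(x, y) → edgeDistLE G 1 e s(x, y) → π e ≠ none) :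
    HasType0 G π x y ∨
    (∃ a b : Fin 8, a ≠ b ∧
      (HasType1 π x y a b ∨ HasType2 G π x y a b ∨ HasType3 G π x y a b ∨
        HasType4 G π x y a b ∨ HasType5 G π x y a b)) ∨
    (∃ a b c d : Fin 8, a ≠ b ∧ a ≠ c ∧ a ≠ d ∧ b ≠ c ∧ b ≠ d ∧ c ≠ d ∧
      HasType6 G π x y a b c d) := by
  rcases hbf with ⟨z, v1, v2, v3, hb⟩ | ⟨z, v1, v2, v3, v4, hb⟩
  · obtain ⟨hpw, hxy', hxz, hyv1, hyv3, hzv1, hzv2, hxv1, hxv2, hxv3,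
      hdy, hdz, hdx, hd1, hd2, hd3⟩ := hb
    simp only [List.pairwise_cons, List.mem_cons, List.not_mem_nil, or_false,
      List.mem_singleton, forall_eq_or_imp, forall_eq, List.Pairwise.nil,
      and_true, ne_eq] at hpw
    obtain ⟨⟨hxy2, hxz2, hxv12, hxv22, hxv32⟩, ⟨hyz2, hyv12, hyv22, hyv32⟩,
      ⟨hzv12, hzv22, hzv32⟩, ⟨hv122, hv132⟩, hv232⟩ := hpw
    have hNy : G.neighborFinset y = {x, v1, v3} :=
      nbrs_eq hdy hxy'.symm hyv1 hyv3 hxv12 hxv32 hv132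
    have hNz : G.neighborFinset z = {x, v1, v2} :=
      nbrs_eq hdz hxz.symm hzv1 hzv2 hxv12 hxv22 hv122
    exact key hΔ hπ hxy' hxz hxv1 hxv2 hxv1 hxv3 hyv1 hyv3 hzv1 hzv2 hyz2 hyv12 hyv22
      hv122 hv132 (fun h => hzv12 h.symm) (fun h => hzv32 h.symm) hNy hNz huncol hcol
  · obtain ⟨hpw, hxy', hxz, hyv1, hyv4, hzv2, hzv3, hxv1, hxv2, hxv3, hxv4,
      hdy, hdz, hdx, hd1, hd2, hd3, hd4⟩ := hb
    simp only [List.pairwise_cons, List.mem_cons, List.not_mem_nil, or_false,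
      List.mem_singleton, forall_eq_or_imp, forall_eq, List.Pairwise.nil,
      and_true, ne_eq] at hpw
    obtain ⟨⟨hxy2, hxz2, hxv12, hxv22, hxv32, hxv42⟩, ⟨hyz2, hyv12, hyv22, hyv32, hyv42⟩,
      ⟨hzv12, hzv22, hzv32, hzv42⟩, ⟨hv122, hv132, hv142⟩, ⟨hv232, hv242⟩, hv342⟩ := hpw
    have hNy : G.neighborFinset y = {x, v1, v4} :=
      nbrs_eq hdy hxy'.symm hyv1 hyv4 hxv12 hxv42 hv142
    have hNz : G.neighborFinset z = {x, v2, v3} :=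
      nbrs_eq hdz hxz.symm hzv2 hzv3 hxv22 hxv32 hv232
    exact key hΔ hπ hxy' hxz hxv2 hxv3 hxv1 hxv4 hyv1 hyv4 hzv2 hzv3 hyz2 hyv22 hyv32
      hv232 hv142 (fun h => hzv12 h.symm) (fun h => hzv42 h.symm) hNy hNz huncol hcol
end

section
/- Let G = (V, E) be a simple graph with Δ(G) ≤ 8, let π be a partial 8-edge-coloring of G, and let E_{ab} ⊆ E be a set of uncolored butterfly-like edges of type 2_{ab} for some distinct colors a, b ∈ {1,…,8}, which are pairwise 2-independent. Then there exists a partial 8-edge-coloring σ of G with the same set of colored edges as π such that every edge of E_{ab} has type 1_{ab} with respect to σ. -/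
open SimpleGraph

/-- An internal vertex of a path cannot have a unique neighbor. -/
lemma aux_interior_unique_nbr {V : Type} [DecidableEq V] {Γ : SimpleGraph V} {u w m t₀ : V}
    {P : Γ.Walk u w} (hP : P.IsPath) (hm : m ∈ P.support) (hmu : m ≠ u) (hmw : m ≠ w)
    (hnb : ∀ t, Γ.Adj m t → t = t₀) : False := by
  have hspec := P.take_spec hm
  have hq : (P.takeUntil m hm).IsPath := hP.takeUntil hm
  have hr : (P.dropUntil m hm).IsPath := hP.dropUntil hm
  obtain ⟨t₁, h₁, r', hr'⟩ := Walk.exists_eq_cons_of_ne hmw (P.dropUntil m hm)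
  obtain ⟨t₂, h₂, q', hq'⟩ := Walk.exists_eq_cons_of_ne hmu (P.takeUntil m hm).reverse
  have ht₁ : t₁ ∈ (P.dropUntil m hm).support.tail := by
    rw [hr', Walk.support_cons, List.tail_cons]; exact r'.start_mem_support
  have ht₂ : t₂ ∈ (P.takeUntil m hm).support := by
    have : t₂ ∈ (P.takeUntil m hm).reverse.support := by
      rw [hq', Walk.support_cons]; exact List.mem_cons_of_mem _ q'.start_mem_support
    rwa [Walk.support_reverse, List.mem_reverse] at this
  have hnodup : ((P.takeUntil m hm).support ++ (P.dropUntil m hm).support.tail).Nodup := by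
    rw [← Walk.support_append, hspec]; exact hP.support_nodup
  have hdisj := (List.nodup_append'.mp hnodup).2.2
  exact hdisj ht₂ (by rw [hnb t₂ h₂, ← hnb t₁ h₁]; exact ht₁)

/-- Every vertex on a cycle has two distinct neighbors along the cycle. -/
lemma aux_cycle_two_nbrs {V : Type} [DecidableEq V] {H : SimpleGraph V} {x u : V} {C : H.Walk x x}
    (hC : C.IsCycle) (hu : u ∈ C.support) :
    ∃ t₁ t₂, t₁ ≠ t₂ ∧ s(u, t₁) ∈ C.edges ∧ s(u, t₂) ∈ C.edges := by
  have hC' := hC.rotate hu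
  have hrot := C.rotate_edges u hu
  obtain ⟨t₁, h₁, p, hcons⟩ : ∃ t, ∃ _h : H.Adj u t, ∃ p : H.Walk t u,
      C.rotate u hu = Walk.cons _h p := by
    cases hh : C.rotate u hu with
    | nil => rw [hh] at hC'; exact absurd rfl hC'.ne_nil
    | cons h p => exact ⟨_, h, p, rfl⟩
  rw [hcons, Walk.cons_isCycle_iff] at hC'
  obtain ⟨hp, hs⟩ := hC'
  obtain ⟨t₂, h₂, q, hq⟩ := Walk.exists_eq_cons_of_ne h₁.ne p.reverse
  have he₂ : s(u, t₂) ∈ p.edges := by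
    have : s(u, t₂) ∈ p.reverse.edges := by rw [hq, Walk.edges_cons]; exact List.mem_cons_self
    rwa [Walk.edges_reverse, List.mem_reverse] at this
  refine ⟨t₁, t₂, fun h => hs (h ▸ he₂), ?_, ?_⟩
  · have : s(u, t₁) ∈ (C.rotate u hu).edges := by
      rw [hcons, Walk.edges_cons]; exact List.mem_cons_self
    exact hrot.mem_iff.mp this
  · have : s(u, t₂) ∈ (C.rotate u hu).edges := by
      rw [hcons, Walk.edges_cons]; exact List.mem_cons_of_mem _ he₂
    exact hrot.mem_iff.mp this

/-- Bridge lemma: in a graph of maximum degree 2, if the component of `x` contains a vertex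
with at most one neighbor, then there is no walk from `x` to `z` avoiding the edge `xz`. -/
lemma aux_bridge {V : Type} [DecidableEq V] {H : SimpleGraph V} {x z v : V}
    (hdeg : ∀ u t₁ t₂ t₃ : V, H.Adj u t₁ → H.Adj u t₂ → H.Adj u t₃ →
      t₁ = t₂ ∨ t₁ = t₃ ∨ t₂ = t₃)
    (hxz : H.Adj x z) (hreach : H.Reachable x v)
    (hv : (H.neighborSet v).Subsingleton)
    (W : H.Walk x z) (hW : s(x, z) ∉ W.edges) : False := by
  -- replace W by a path
  have hW' : s(x, z) ∉ W.bypass.edges := fun h => hW (W.edges_bypass_subset h)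
  have hWp : W.bypass.IsPath := W.bypass_isPath
  set C : H.Walk x x := Walk.cons hxz W.bypass.reverse with hC
  have hCyc : C.IsCycle := by
    rw [hC, Walk.cons_isCycle_iff]
    exact ⟨hWp.reverse, fun h => hW' (by rwa [Walk.edges_reverse, List.mem_reverse] at h)⟩
  have hadj_of_mem : ∀ u t : V, s(u, t) ∈ C.edges → H.Adj u t := fun u t h =>
    (H.mem_edgeSet).mp (C.edges_subset_edgeSet h)
  have hclose : ∀ u, u ∈ C.support → ∀ t, H.Adj u t → t ∈ C.support := by
    intro u hu t hAdj
    obtain ⟨t₁, t₂, hne, he₁, he₂⟩ := aux_cycle_two_nbrs hCyc hu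
    rcases hdeg u t₁ t₂ t (hadj_of_mem u t₁ he₁) (hadj_of_mem u t₂ he₂) hAdj with
      h | h | h
    · exact absurd h hne
    · exact h ▸ C.snd_mem_support_of_mem_edges he₁
    · exact h ▸ C.snd_mem_support_of_mem_edges he₂
  have key : ∀ (u u' : V) (w : H.Walk u u'), u ∈ C.support → u' ∈ C.support := by
    intro u u' w
    induction w with
    | nil => exact id
    | @cons a b c h p ih => intro ha; exact ih (hclose a ha b h)
  obtain ⟨w⟩ := hreach
  have hvC : v ∈ C.support := key x v w C.start_mem_support
  obtain ⟨t₁, t₂, hne, he₁, he₂⟩ := aux_cycle_two_nbrs hCyc hvC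
  exact hne (hv (hadj_of_mem v t₁ he₁) (hadj_of_mem v t₂ he₂))
/-- A pairwise 2-independent family of uncolored butterfly-like edges of type `2_{ab}` can be
turned, without changing the set of colored edges, into a family of edges of type `1_{ab}`. -/
theorem stmt10 {V : Type} [Fintype V] [DecidableEq V] (G : SimpleGraph V) [DecidableRel G.Adj]
    (hΔ : G.maxDegree ≤ 8) (π : Sym2 V → Option (Fin 8)) (hπ : IsProperPEC G 8 π)
    (a b : Fin 8) (hab : a ≠ b) (S : Set (V × V))
    (hS : ∀ p ∈ S, G.Adj p.1 p.2 ∧ π s(p.1, p.2) = none ∧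
      IsButterflyLikeAt G p.1 p.2 ∧ HasType2 G π p.1 p.2 a b)
    (hind : ∀ p ∈ S, ∀ q ∈ S, p ≠ q → ¬ edgeDistLE G 2 s(p.1, p.2) s(q.1, q.2)) :
    ∃ σ : Sym2 V → Option (Fin 8), IsProperPEC G 8 σ ∧
      (∀ e, σ e ≠ none ↔ π e ≠ none) ∧
      ∀ p ∈ S, HasType1 σ p.1 p.2 a b := by
  classical
  have hdata : ∀ p : V × V, ∃ cz : Fin 8 × V, p ∈ S →
      G.Adj p.1 p.2 ∧ π s(p.1, p.2) = none ∧
      freeAt π p.2 a ∧ freeAt π p.2 b ∧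
      cz.1 ≠ b ∧ freeAt π p.1 cz.1 ∧
      G.Adj p.1 cz.2 ∧ G.Adj p.2 cz.2 ∧
      π s(p.2, cz.2) = some cz.1 ∧ π s(p.1, cz.2) = some a ∧
      ¬ inChainCycle π a b p.1 := by
    intro p
    by_cases hp : p ∈ S
    · obtain ⟨hadj, hnone, -, hfa, hfb, c, hcb, hfc, z, h1, h2, h3, h4, h5⟩ := hS p hp
      exact ⟨(c, z), fun _ => ⟨hadj, hnone, hfa, hfb, hcb, hfc, h1, h2, h3, h4, h5⟩⟩
    · exact ⟨(a, p.1), fun h => absurd h hp⟩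
  choose f hf using hdata
  set cc : V × V → Fin 8 := fun p => (f p).1 with hccdef
  set zz : V × V → V := fun p => (f p).2 with hzzdef
  have hAxy : ∀ p ∈ S, G.Adj p.1 p.2 := fun p hp => (hf p hp).1
  have hfya : ∀ p ∈ S, freeAt π p.2 a := fun p hp => (hf p hp).2.2.1
  have hfyb : ∀ p ∈ S, freeAt π p.2 b := fun p hp => (hf p hp).2.2.2.1
  have hcb : ∀ p ∈ S, cc p ≠ b := fun p hp => (hf p hp).2.2.2.2.1
  have hfxc : ∀ p ∈ S, freeAt π p.1 (cc p) := fun p hp => (hf p hp).2.2.2.2.2.1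
  have hAxz : ∀ p ∈ S, G.Adj p.1 (zz p) := fun p hp => (hf p hp).2.2.2.2.2.2.1
  have hAyz : ∀ p ∈ S, G.Adj p.2 (zz p) := fun p hp => (hf p hp).2.2.2.2.2.2.2.1
  have hπyz : ∀ p ∈ S, π s(p.2, zz p) = some (cc p) := fun p hp =>
    (hf p hp).2.2.2.2.2.2.2.2.1
  have hπxz : ∀ p ∈ S, π s(p.1, zz p) = some a := fun p hp =>
    (hf p hp).2.2.2.2.2.2.2.2.2.1
  have hncyc : ∀ p ∈ S, ¬ inChainCycle π a b p.1 := fun p hp =>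
    (hf p hp).2.2.2.2.2.2.2.2.2.2
  have hca : ∀ p ∈ S, cc p ≠ a := fun p hp h =>
    hfya p hp s(p.2, zz p) (Sym2.mem_mk_left _ _) (by rw [hπyz p hp, h])
  have hwne : ∀ p ∈ S, p.1 ≠ p.2 ∧ p.1 ≠ zz p ∧ p.2 ≠ zz p := fun p hp =>
    ⟨(hAxy p hp).ne, (hAxz p hp).ne, (hAyz p hp).ne⟩
  -- 2-independence: near-vertices of distinct members of S are distinct
  have hnear : ∀ p ∈ S, ∀ q ∈ S, p ≠ q → ∀ w : V,
      (w = p.1 ∨ w = p.2 ∨ w = zz p) → (w = q.1 ∨ w = q.2 ∨ w = zz q) → False := by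
    intro p hp q hq hpq w hw1 hw2
    apply hind p hp q hq hpq
    have h1 : ∃ u, u ∈ s(p.1, p.2) ∧ ∃ W : G.Walk u w, W.length ≤ 1 := by
      rcases hw1 with h | h | h
      · exact ⟨p.1, Sym2.mem_mk_left _ _, (Walk.nil : G.Walk p.1 p.1).copy rfl h.symm, by simp⟩
      · exact ⟨p.2, Sym2.mem_mk_right _ _, (Walk.nil : G.Walk p.2 p.2).copy rfl h.symm, by simp⟩
      · exact ⟨p.1, Sym2.mem_mk_left _ _,
          (Walk.cons (hAxz p hp) Walk.nil).copy rfl h.symm, by simp⟩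
    have h2 : ∃ u, u ∈ s(q.1, q.2) ∧ ∃ W : G.Walk w u, W.length ≤ 1 := by
      rcases hw2 with h | h | h
      · exact ⟨q.1, Sym2.mem_mk_left _ _, (Walk.nil : G.Walk q.1 q.1).copy h.symm rfl, by simp⟩
      · exact ⟨q.2, Sym2.mem_mk_right _ _, (Walk.nil : G.Walk q.2 q.2).copy h.symm rfl, by simp⟩
      · exact ⟨q.1, Sym2.mem_mk_left _ _,
          (Walk.cons (hAxz q hq).symm Walk.nil).copy h.symm rfl, by simp⟩
    obtain ⟨u₁, hu₁, W1, hW1⟩ := h1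
    obtain ⟨u₂, hu₂, W2, hW2⟩ := h2
    exact ⟨u₁, hu₁, u₂, hu₂, W1.append W2, by rw [Walk.length_append]; omega⟩
  have uniqA : ∀ p ∈ S, ∀ q ∈ S, s(p.1, zz p) = s(q.1, zz q) → p = q := by
    intro p hp q hq h
    by_contra hpq
    rcases Sym2.eq_iff.mp h with ⟨h1, -⟩ | ⟨h1, -⟩
    · exact hnear p hp q hq hpq p.1 (Or.inl rfl) (Or.inl h1)
    · exact hnear p hp q hq hpq p.1 (Or.inl rfl) (Or.inr (Or.inr h1))
  have hABne : ∀ p ∈ S, ∀ q ∈ S, s(p.2, zz p) ≠ s(q.1, zz q) := by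
    intro p hp q hq h
    by_cases hpq : p = q
    · subst hpq
      rcases Sym2.eq_iff.mp h with ⟨h1, -⟩ | ⟨h1, -⟩
      · exact (hwne p hp).1 h1.symm
      · exact (hwne p hp).2.2 h1
    · rcases Sym2.eq_iff.mp h with ⟨h1, -⟩ | ⟨h1, -⟩
      · exact hnear p hp q hq hpq p.2 (Or.inr (Or.inl rfl)) (Or.inl h1)
      · exact hnear p hp q hq hpq p.2 (Or.inr (Or.inl rfl)) (Or.inr (Or.inr h1))
  -- the recoloring
  set σ : Sym2 V → Option (Fin 8) := fun e =>
    if h : ∃ p, p ∈ S ∧ e = s(p.1, zz p) then some (cc h.choose)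
    else if ∃ p, p ∈ S ∧ e = s(p.2, zz p) then some a
    else π e with hσ
  have evalA : ∀ p ∈ S, σ s(p.1, zz p) = some (cc p) := by
    intro p hp
    have hex : ∃ q, q ∈ S ∧ s(p.1, zz p) = s(q.1, zz q) := ⟨p, hp, rfl⟩
    have hspec := hex.choose_spec
    simp only [hσ, dif_pos hex]
    rw [← uniqA p hp hex.choose hspec.1 hspec.2]
  have evalB : ∀ p ∈ S, σ s(p.2, zz p) = some a := by
    intro p hp
    have hnex : ¬ ∃ q, q ∈ S ∧ s(p.2, zz p) = s(q.1, zz q) := by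
      rintro ⟨q, hq, h⟩; exact hABne p hp q hq h
    have hex : ∃ q, q ∈ S ∧ s(p.2, zz p) = s(q.2, zz q) := ⟨p, hp, rfl⟩
    simp only [hσ, dif_neg hnex, if_pos hex]
  have evalC : ∀ e : Sym2 V, (∀ p ∈ S, e ≠ s(p.1, zz p) ∧ e ≠ s(p.2, zz p)) → σ e = π e := by
    intro e he
    have h1 : ¬ ∃ q, q ∈ S ∧ e = s(q.1, zz q) := by rintro ⟨q, hq, h⟩; exact (he q hq).1 h
    have h2 : ¬ ∃ q, q ∈ S ∧ e = s(q.2, zz q) := by rintro ⟨q, hq, h⟩; exact (he q hq).2 h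
    simp only [hσ, dif_neg h1, if_neg h2]
  have hcasesσ : ∀ e : Sym2 V, (∃ p, p ∈ S ∧ e = s(p.1, zz p)) ∨
      (∃ p, p ∈ S ∧ e = s(p.2, zz p)) ∨
      ((∀ p ∈ S, e ≠ s(p.1, zz p) ∧ e ≠ s(p.2, zz p)) ∧ σ e = π e) := by
    intro e
    by_cases h1 : ∃ p, p ∈ S ∧ e = s(p.1, zz p)
    · exact Or.inl h1
    by_cases h2 : ∃ p, p ∈ S ∧ e = s(p.2, zz p)
    · exact Or.inr (Or.inl h2)
    have hns : ∀ p ∈ S, e ≠ s(p.1, zz p) ∧ e ≠ s(p.2, zz p) := fun p hp =>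
      ⟨fun h => h1 ⟨p, hp, h⟩, fun h => h2 ⟨p, hp, h⟩⟩
    exact Or.inr (Or.inr ⟨hns, evalC e hns⟩)
  -- consequences of properness of π
  have hnotc : ∀ p ∈ S, ∀ e : Sym2 V, zz p ∈ e → e ≠ s(p.2, zz p) → π e ≠ some (cc p) := by
    intro p hp e he hne hc
    exact hπ.2 s(p.2, zz p) e (fun h => hne h.symm) ⟨zz p, Sym2.mem_mk_right _ _, he⟩
      (by rw [hπyz p hp]; simp) (by rw [hπyz p hp, hc])
  have hnota : ∀ p ∈ S, ∀ e : Sym2 V, zz p ∈ e → e ≠ s(p.1, zz p) → π e ≠ some a := by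
    intro p hp e he hne hc
    exact hπ.2 s(p.1, zz p) e (fun h => hne h.symm) ⟨zz p, Sym2.mem_mk_right _ _, he⟩
      (by rw [hπxz p hp]; simp) (by rw [hπxz p hp, hc])
  have hnotax : ∀ p ∈ S, ∀ e : Sym2 V, p.1 ∈ e → e ≠ s(p.1, zz p) → π e ≠ some a := by
    intro p hp e he hne hc
    exact hπ.2 s(p.1, zz p) e (fun h => hne h.symm) ⟨p.1, Sym2.mem_mk_left _ _, he⟩
      (by rw [hπxz p hp]; simp) (by rw [hπxz p hp, hc])
  -- properness of σ
  have hproper : IsProperPEC G 8 σ := by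
    constructor
    · intro e he
      rcases hcasesσ e with ⟨p, hp, rfl⟩ | ⟨p, hp, rfl⟩ | ⟨-, heq⟩
      · exact (hAxz p hp)
      · exact (hAyz p hp)
      · exact hπ.1 e (by rwa [heq] at he)
    · rintro e₁ e₂ hne ⟨v, hv1, hv2⟩ h1
      have memA : ∀ p : V × V, v ∈ s(p.1, zz p) → v = p.1 ∨ v = p.2 ∨ v = zz p := by
        intro p h
        rcases Sym2.mem_iff.mp h with h | h
        exacts [Or.inl h, Or.inr (Or.inr h)]
      have memB : ∀ p : V × V, v ∈ s(p.2, zz p) → v = p.1 ∨ v = p.2 ∨ v = zz p := by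
        intro p h
        rcases Sym2.mem_iff.mp h with h | h
        exacts [Or.inr (Or.inl h), Or.inr (Or.inr h)]
      rcases hcasesσ e₁ with ⟨p, hp, he₁⟩ | ⟨p, hp, he₁⟩ | ⟨hns₁, heq₁⟩ <;>
        rcases hcasesσ e₂ with ⟨q, hq, he₂⟩ | ⟨q, hq, he₂⟩ | ⟨hns₂, heq₂⟩
      · by_cases hpq : p = q
        · subst hpq; exact absurd (he₁.trans he₂.symm) hne
        · exact absurd (hnear p hp q hq hpq v (memA p (he₁ ▸ hv1)) (memA q (he₂ ▸ hv2))) id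
      · by_cases hpq : p = q
        · subst hpq
          rw [he₁, evalA p hp, he₂, evalB p hp]
          exact fun h => hca p hp (Option.some.inj h)
        · exact absurd (hnear p hp q hq hpq v (memA p (he₁ ▸ hv1)) (memB q (he₂ ▸ hv2))) id
      · rw [he₁, evalA p hp, heq₂]
        rcases Sym2.mem_iff.mp (he₁ ▸ hv1) with hvp | hvp
        · exact fun h => hfxc p hp e₂ (hvp ▸ hv2) h.symm
        · exact fun h => hnotc p hp e₂ (hvp ▸ hv2) (hns₂ p hp).2 h.symm
      · by_cases hpq : p = q
        · subst hpq
          rw [he₁, evalB p hp, he₂, evalA p hp]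
          exact fun h => hca p hp (Option.some.inj h).symm
        · exact absurd (hnear p hp q hq hpq v (memB p (he₁ ▸ hv1)) (memA q (he₂ ▸ hv2))) id
      · by_cases hpq : p = q
        · subst hpq; exact absurd (he₁.trans he₂.symm) hne
        · exact absurd (hnear p hp q hq hpq v (memB p (he₁ ▸ hv1)) (memB q (he₂ ▸ hv2))) id
      · rw [he₁, evalB p hp, heq₂]
        rcases Sym2.mem_iff.mp (he₁ ▸ hv1) with hvp | hvp
        · exact fun h => hfya p hp e₂ (hvp ▸ hv2) h.symm
        · exact fun h => hnota p hp e₂ (hvp ▸ hv2) (hns₂ p hp).1 h.symm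
      · rw [heq₁, he₂, evalA q hq]
        rcases Sym2.mem_iff.mp (he₂ ▸ hv2) with hvq | hvq
        · exact hfxc q hq e₁ (hvq ▸ hv1)
        · exact hnotc q hq e₁ (hvq ▸ hv1) (hns₁ q hq).2
      · rw [heq₁, he₂, evalB q hq]
        rcases Sym2.mem_iff.mp (he₂ ▸ hv2) with hvq | hvq
        · exact hfya q hq e₁ (hvq ▸ hv1)
        · exact hnota q hq e₁ (hvq ▸ hv1) (hns₁ q hq).1
      · rw [heq₁, heq₂]
        exact hπ.2 e₁ e₂ hne ⟨v, hv1, hv2⟩ (by rwa [heq₁] at h1)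
  -- colored edges unchanged
  have hsame_dom : ∀ e, σ e ≠ none ↔ π e ≠ none := by
    intro e
    rcases hcasesσ e with ⟨p, hp, rfl⟩ | ⟨p, hp, rfl⟩ | ⟨-, heq⟩
    · rw [evalA p hp, hπxz p hp]; simp
    · rw [evalB p hp, hπyz p hp]; simp
    · rw [heq]
  -- adjacency in chain graphs
  have hchadj : ∀ (τ : Sym2 V → Option (Fin 8)) (u w : V),
      (chainGraph τ a b).Adj u w ↔ (τ s(u, w) = some a ∨ τ s(u, w) = some b) ∧ u ≠ w := by
    intro τ u w
    rw [chainGraph, fromEdgeSet_adj]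
    exact Iff.rfl
  have hdegπ : ∀ u t₁ t₂ t₃ : V, (chainGraph π a b).Adj u t₁ → (chainGraph π a b).Adj u t₂ →
      (chainGraph π a b).Adj u t₃ → t₁ = t₂ ∨ t₁ = t₃ ∨ t₂ = t₃ := by
    intro u t₁ t₂ t₃ h1 h2 h3
    rw [hchadj] at h1 h2 h3
    by_contra hcon
    push_neg at hcon
    obtain ⟨n12, n13, n23⟩ := hcon
    have key : ∀ t t' : V, t ≠ t' → u ≠ t → u ≠ t' → π s(u, t) ≠ none →
        π s(u, t) = π s(u, t') → False := by
      intro t t' htt hut hut' hnn heq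
      refine hπ.2 s(u, t) s(u, t') ?_ ⟨u, Sym2.mem_mk_left _ _, Sym2.mem_mk_left _ _⟩ hnn heq
      intro h
      rcases Sym2.eq_iff.mp h with ⟨-, h2⟩ | ⟨h1, -⟩
      · exact htt h2
      · exact hut' h1
    rcases h1.1 with c1 | c1 <;> rcases h2.1 with c2 | c2 <;> rcases h3.1 with c3 | c3 <;>
      first
        | exact key t₁ t₂ n12 h1.2 h2.2 (by rw [c1]; simp) (c1.trans c2.symm)
        | exact key t₁ t₃ n13 h1.2 h3.2 (by rw [c1]; simp) (c1.trans c3.symm)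
        | exact key t₂ t₃ n23 h2.2 h3.2 (by rw [c2]; simp) (c2.trans c3.symm)
  -- the unique chain-neighbor of each y
  have hyNbr : ∀ q ∈ S, ∀ w : V, (chainGraph σ a b).Adj q.2 w → w = zz q := by
    intro q hq w hadj
    rw [hchadj] at hadj
    obtain ⟨hcol, -⟩ := hadj
    rcases hcasesσ s(q.2, w) with ⟨r, hr, heq⟩ | ⟨r, hr, heq⟩ | ⟨-, heq⟩
    · rw [heq, evalA r hr] at hcol
      rcases hcol with h | h
      · exact absurd (Option.some.inj h) (hca r hr)
      · exact absurd (Option.some.inj h) (hcb r hr)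
    · by_cases hqr : q = r
      · subst hqr
        rcases Sym2.eq_iff.mp heq with ⟨-, h2⟩ | ⟨h1, -⟩
        · exact h2
        · exact absurd h1 (hwne q hq).2.2
      · rcases Sym2.eq_iff.mp heq with ⟨h1, -⟩ | ⟨h1, -⟩
        · exact absurd (hnear q hq r hr hqr q.2 (Or.inr (Or.inl rfl))
            (Or.inr (Or.inl h1))) id
        · exact absurd (hnear q hq r hr hqr q.2 (Or.inr (Or.inl rfl))
            (Or.inr (Or.inr h1))) id
    · rw [heq] at hcol
      rcases hcol with h | h
      · exact absurd h (hfya q hq s(q.2, w) (Sym2.mem_mk_left _ _))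
      · exact absurd h (hfyb q hq s(q.2, w) (Sym2.mem_mk_left _ _))
  have hedgeSetτ : ∀ (τ : Sym2 V → Option (Fin 8)) (e : Sym2 V),
      e ∈ (chainGraph τ a b).edgeSet ↔ (τ e = some a ∨ τ e = some b) ∧ ¬ e.IsDiag := by
    intro τ e
    rw [chainGraph, edgeSet_fromEdgeSet, Set.mem_diff]
    exact Iff.rfl
  refine ⟨σ, hproper, hsame_dom, ?_⟩
  intro p hpS
  refine ⟨?_, ?_, ?_⟩
  · -- freeAt σ p.1 a
    intro e he
    rcases hcasesσ e with ⟨q, hq, rfl⟩ | ⟨q, hq, rfl⟩ | ⟨hns, heq⟩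
    · rw [evalA q hq]
      exact fun h => hca q hq (Option.some.inj h)
    · exfalso
      by_cases hpq : p = q
      · subst hpq
        rcases Sym2.mem_iff.mp he with h | h
        · exact (hwne p hpS).1 h
        · exact (hwne p hpS).2.1 h
      · rcases Sym2.mem_iff.mp he with h | h
        · exact hnear p hpS q hq hpq p.1 (Or.inl rfl) (Or.inr (Or.inl h))
        · exact hnear p hpS q hq hpq p.1 (Or.inl rfl) (Or.inr (Or.inr h))
    · rw [heq]
      exact hnotax p hpS e he (hns p hpS).1
  · -- freeAt σ p.2 b
    intro e he
    rcases hcasesσ e with ⟨q, hq, rfl⟩ | ⟨q, hq, rfl⟩ | ⟨hns, heq⟩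
    · rw [evalA q hq]
      exact fun h => hcb q hq (Option.some.inj h)
    · rw [evalB q hq]
      exact fun h => hab (Option.some.inj h)
    · rw [heq]
      exact hfyb p hpS e he
  · -- the chain condition
    rintro ⟨hreach, -⟩
    have hreach' : (chainGraph σ a b).Reachable p.1 p.2 := hreach
    obtain ⟨P0⟩ := hreach'
    have hxy : p.1 ≠ p.2 := (hwne p hpS).1
    have hP : P0.bypass.IsPath := P0.bypass_isPath
    obtain ⟨t, ht, Q1, hQ⟩ := Walk.exists_eq_cons_of_ne hxy.symm P0.bypass.reverse
    have htz : t = zz p := hyNbr p hpS t ht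
    subst htz
    have hQpath : (Walk.cons ht Q1).IsPath := by rw [← hQ]; exact hP.reverse
    rw [Walk.cons_isPath_iff] at hQpath
    obtain ⟨hQ1path, hynot⟩ := hQpath
    have hRpath : Q1.reverse.IsPath := hQ1path.reverse
    have hysupp : p.2 ∉ Q1.reverse.support := by
      rw [Walk.support_reverse, List.mem_reverse]; exact hynot
    have hAvoid : ∀ q ∈ S, q.2 ∉ Q1.reverse.support := by
      intro q hq hmem
      by_cases hqp : q = p
      · subst hqp; exact hysupp hmem
      · have h1 : q.2 ≠ p.1 := fun h =>
          hnear q hq p hpS hqp q.2 (Or.inr (Or.inl rfl)) (Or.inl h)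
        have h2 : q.2 ≠ zz p := fun h =>
          hnear q hq p hpS hqp q.2 (Or.inr (Or.inl rfl)) (Or.inr (Or.inr h))
        exact aux_interior_unique_nbr hRpath hmem h1 h2 (hyNbr q hq)
    have hedges : ∀ e ∈ Q1.reverse.edges,
        e ∈ (chainGraph π a b).edgeSet ∧ e ≠ s(p.1, zz p) := by
      intro e he
      have headj : e ∈ (chainGraph σ a b).edgeSet := Q1.reverse.edges_subset_edgeSet he
      rw [hedgeSetτ] at headj
      rcases hcasesσ e with ⟨r, hr, hee⟩ | ⟨r, hr, hee⟩ | ⟨hns, heq⟩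
      · exfalso
        rw [hee, evalA r hr] at headj
        rcases headj.1 with h | h
        · exact hca r hr (Option.some.inj h)
        · exact hcb r hr (Option.some.inj h)
      · exfalso
        rw [hee] at he
        exact hAvoid r hr (Q1.reverse.fst_mem_support_of_mem_edges he)
      · refine ⟨?_, (hns p hpS).1⟩
        rw [hedgeSetτ]
        rwa [heq] at headj
    have hsub : ∀ e ∈ Q1.reverse.edges, e ∈ (chainGraph π a b).edgeSet := fun e he =>
      (hedges e he).1
    have hWedges := Q1.reverse.edges_transfer hsub
    have hWavoid : s(p.1, zz p) ∉ (Q1.reverse.transfer (chainGraph π a b) hsub).edges := by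
      rw [hWedges]; intro h; exact (hedges _ h).2 rfl
    have hHxz : (chainGraph π a b).Adj p.1 (zz p) := by
      rw [hchadj]; exact ⟨Or.inl (hπxz p hpS), (hwne p hpS).2.1⟩
    have hcy := hncyc p hpS
    rw [inChainCycle] at hcy
    push_neg at hcy
    obtain ⟨v, hv1, hv2⟩ := hcy
    exact aux_bridge hdegπ hHxz hv1 hv2 (Q1.reverse.transfer (chainGraph π a b) hsub) hWavoid
end

section
/- Let G be a simple graph with partial 8-edge-coloring π and let e = xy be an uncolored edge of type 2_{ab} with witnesses c ∈ π̄(x)∖{b} and common neighbor z of x and y such that π(yz) = c, π(xz) = a, and xz does not belong to an (a,b)-cycle. Then swapping the colors of the edges yz and xz (coloring yz with a and xz with c) yields a proper partial 8-edge-coloring σ with the same colored set as π, in which a ∈ σ̄(x), b ∈ σ̄(y), and x is not an endpoint of the (a,b)-chain (with respect to σ) containing y; that is, e has type 1_{ab} with respect to σ. -/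
open SimpleGraph

lemma two_nbrs_of_cycle {V : Type} {H : SimpleGraph V} {u t : V} (p : H.Walk u u)
    (hc : p.IsCycle) (ht : t ∈ p.support) :
    ∃ s1 s2 : V, s1 ≠ s2 ∧ H.Adj t s1 ∧ H.Adj t s2 ∧ s1 ∈ p.support ∧ s2 ∈ p.support := by
  classical
  set q := p.rotate t ht with hqdef
  have hq : q.IsCycle := hc.rotate ht
  have hsub : ∀ s, s ∈ q.support → s ∈ p.support := by
    intro s hs
    rw [Walk.support_eq_cons] at hs
    rcases List.mem_cons.mp hs with rfl | hs
    · exact ht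
    · have hrot := Walk.support_rotate p t ht
      have : s ∈ p.support.tail := hrot.mem_iff.mp hs
      rw [Walk.support_eq_cons p]
      exact List.mem_cons_of_mem _ this
  obtain ⟨w, hadj, q', hqeq⟩ := Walk.not_nil_iff.mp hq.not_nil
  have hwmem : w ∈ q.support := by
    rw [hqeq, Walk.support_cons]
    exact List.mem_cons_of_mem _ q'.start_mem_support
  have hnnil : ¬ q'.reverse.Nil := Walk.not_nil_of_ne (fun h => H.irrefl (h ▸ hadj))
  obtain ⟨s2, hadj2, r, hreq⟩ := Walk.not_nil_iff.mp hnnil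
  have hs2q' : s2 ∈ q'.support := by
    have h1 : s2 ∈ q'.reverse.support := by
      rw [hreq, Walk.support_cons]
      exact List.mem_cons_of_mem _ r.start_mem_support
    rwa [Walk.support_reverse, List.mem_reverse] at h1
  have hs2mem : s2 ∈ q.support := by
    rw [hqeq, Walk.support_cons]
    exact List.mem_cons_of_mem _ hs2q'
  have hq'eq : q' = (Walk.cons hadj2 r).reverse := by rw [← hreq, Walk.reverse_reverse]
  have hmem2 : s(t, s2) ∈ q'.edges := by
    rw [hq'eq, Walk.edges_reverse, List.mem_reverse, Walk.edges_cons]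
    exact List.mem_cons_self
  have hnodup : q.edges.Nodup := hq.isCircuit.isTrail.edges_nodup
  have hne : w ≠ s2 := by
    intro h
    subst h
    rw [hqeq, Walk.edges_cons] at hnodup
    exact (List.nodup_cons.mp hnodup).1 hmem2
  exact ⟨w, s2, hne, hadj, hadj2, hsub w hwmem, hsub s2 hs2mem⟩

/-- Swapping the colors of `yz` and `xz` turns an edge of type `2_{ab}` into one of
type `1_{ab}` without changing the set of colored edges. -/
theorem stmt11 {V : Type} [DecidableEq V] (G : SimpleGraph V)
    (π : Sym2 V → Option (Fin 8)) (hπ : IsProperPEC G 8 π)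
    (x y z : V) (a b c : Fin 8) (hab : a ≠ b) (hcb : c ≠ b)
    (hxy : G.Adj x y) (huncol : π s(x, y) = none)
    (hya : freeAt π y a) (hyb : freeAt π y b) (hxc : freeAt π x c)
    (hxz : G.Adj x z) (hyz : G.Adj y z)
    (hπyz : π s(y, z) = some c) (hπxz : π s(x, z) = some a)
    (hnotcycle : ¬ inChainCycle π a b x) :
    let σ : Sym2 V → Option (Fin 8) := fun e =>
      if e = s(y, z) then some a else if e = s(x, z) then some c else π e
    IsProperPEC G 8 σ ∧ (∀ e, σ e ≠ none ↔ π e ≠ none) ∧ HasType1 σ x y a b := by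
  intro σ
  have hσ : ∀ e, σ e = if e = s(y, z) then some a else if e = s(x, z) then some c else π e :=
    fun e => rfl
  have hxyne : x ≠ y := hxy.ne
  have hxzne : x ≠ z := hxz.ne
  have hyzne : y ≠ z := hyz.ne
  have hac : a ≠ c := by
    intro h
    exact hxc s(x, z) (by simp) (by rw [hπxz, h])
  have hEdgene : s(y, z) ≠ s(x, z) := by
    intro h
    rcases Sym2.eq_iff.mp h with ⟨h1, _⟩ | ⟨h1, _⟩
    · exact hxyne h1.symm
    · exact hyzne h1
  have hσyz : σ s(y, z) = some a := by rw [hσ]; simp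
  have hσxz : σ s(x, z) = some c := by rw [hσ]; simp [hEdgene.symm, Ne.symm hEdgene]
  have hσo : ∀ e, e ≠ s(y, z) → e ≠ s(x, z) → σ e = π e := by
    intro e h1 h2; rw [hσ]; simp [h1, h2]
  have uniq : ∀ (u : V) (e e' : Sym2 V) (col : Fin 8), u ∈ e → u ∈ e' → e ≠ e' →
      π e' = some col → π e ≠ some col := by
    intro u e e' col he he' hne h' h
    exact hπ.2 e e' hne ⟨u, he, he'⟩ (by rw [h]; simp) (by rw [h, h'])
  have pa : ∀ e, (∃ u, u ∈ e ∧ u ∈ s(y, z)) → e ≠ s(y, z) → e ≠ s(x, z) → π e ≠ some a := by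
    rintro e ⟨u, hu, hu'⟩ h1 h2
    rcases Sym2.mem_iff.mp hu' with h | h
    · exact hya e (h ▸ hu)
    · exact uniq z e s(x, z) a (h ▸ hu) (by simp) h2 hπxz
  have pc : ∀ e, (∃ u, u ∈ e ∧ u ∈ s(x, z)) → e ≠ s(y, z) → e ≠ s(x, z) → π e ≠ some c := by
    rintro e ⟨u, hu, hu'⟩ h1 h2
    rcases Sym2.mem_iff.mp hu' with h | h
    · exact hxc e (h ▸ hu)
    · exact uniq z e s(y, z) c (h ▸ hu) (by simp) h1 hπyz
  have hproper : IsProperPEC G 8 σ := by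
    constructor
    · intro e he
      by_cases h1 : e = s(y, z)
      · rw [h1]; exact hyz
      · by_cases h2 : e = s(x, z)
        · rw [h2]; exact hxz
        · rw [hσo e h1 h2] at he; exact hπ.1 e he
    · intro e1 e2 hne hshare h1ne
      obtain ⟨v, hv1, hv2⟩ := hshare
      by_cases h1y : e1 = s(y, z)
      · subst h1y
        rw [hσyz]
        by_cases h2x : e2 = s(x, z)
        · rw [h2x, hσxz]; exact fun h => hac (Option.some.inj h)
        · have h2y : e2 ≠ s(y, z) := fun h => hne h.symm
          rw [hσo e2 h2y h2x]
          exact fun h => pa e2 ⟨v, hv2, hv1⟩ h2y h2x h.symm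
      · by_cases h1x : e1 = s(x, z)
        · subst h1x
          rw [hσxz]
          by_cases h2y : e2 = s(y, z)
          · rw [h2y, hσyz]; exact fun h => hac (Option.some.inj h).symm
          · have h2x : e2 ≠ s(x, z) := fun h => hne h.symm
            rw [hσo e2 h2y h2x]
            exact fun h => pc e2 ⟨v, hv2, hv1⟩ h2y h2x h.symm
        · rw [hσo e1 h1y h1x] at h1ne ⊢
          by_cases h2y : e2 = s(y, z)
          · rw [h2y, hσyz]
            exact pa e1 ⟨v, hv1, h2y ▸ hv2⟩ h1y h1x
          · by_cases h2x : e2 = s(x, z)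
            · rw [h2x, hσxz]
              exact pc e1 ⟨v, hv1, h2x ▸ hv2⟩ h1y h1x
            · rw [hσo e2 h2y h2x]
              exact hπ.2 e1 e2 hne ⟨v, hv1, hv2⟩ h1ne
  have hsets : ∀ e, σ e ≠ none ↔ π e ≠ none := by
    intro e
    by_cases h1 : e = s(y, z)
    · rw [h1, hσyz, hπyz]; simp
    · by_cases h2 : e = s(x, z)
      · rw [h2, hσxz, hπxz]; simp
      · rw [hσo e h1 h2]
  have hfxa : freeAt σ x a := by
    intro e he
    by_cases h1 : e = s(y, z)
    · rw [h1] at he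
      rcases Sym2.mem_iff.mp he with h | h
      · exact absurd h hxyne
      · exact absurd h hxzne
    · by_cases h2 : e = s(x, z)
      · rw [h2, hσxz]; exact fun h => hac (Option.some.inj h).symm
      · rw [hσo e h1 h2]
        exact uniq x e s(x, z) a he (by simp) h2 hπxz
  have hfyb : freeAt σ y b := by
    intro e he
    by_cases h1 : e = s(y, z)
    · rw [h1, hσyz]; exact fun h => hab (Option.some.inj h)
    · by_cases h2 : e = s(x, z)
      · rw [h2] at he
        rcases Sym2.mem_iff.mp he with h | h
        · exact absurd h (Ne.symm hxyne)
        · exact absurd h hyzne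
      · rw [hσo e h1 h2]; exact hyb e he
  -- chain graph adjacency characterizations
  have hHpAdj : ∀ u w : V, (chainGraph π a b).Adj u w ↔
      (π s(u, w) = some a ∨ π s(u, w) = some b) ∧ u ≠ w := by
    intro u w
    simp [chainGraph, SimpleGraph.fromEdgeSet_adj, Set.mem_setOf_eq]
  have hHsAdj : ∀ u w : V, (chainGraph σ a b).Adj u w ↔
      (σ s(u, w) = some a ∨ σ s(u, w) = some b) ∧ u ≠ w := by
    intro u w
    simp [chainGraph, SimpleGraph.fromEdgeSet_adj, Set.mem_setOf_eq]
  have maxdeg : ∀ t u s1 s2 : V, (chainGraph π a b).Adj t u → (chainGraph π a b).Adj t s1 →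
      (chainGraph π a b).Adj t s2 → s1 ≠ s2 → u = s1 ∨ u = s2 := by
    intro t u s1 s2 hu h1 h2 h12
    by_contra hcon
    push_neg at hcon
    obtain ⟨hu1, hu2⟩ := hcon
    have edgeNe : ∀ p q : V, t ≠ q → p ≠ q → s(t, p) ≠ s(t, q) := by
      intro p q htq hpq hcon'
      rcases Sym2.eq_iff.mp hcon' with ⟨_, h⟩ | ⟨h1', _⟩
      · exact hpq h
      · exact htq h1'
    rw [hHpAdj] at hu h1 h2
    have n01 : π s(t, u) ≠ π s(t, s1) :=
      hπ.2 _ _ (edgeNe u s1 h1.2 hu1) ⟨t, by simp, by simp⟩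
        (by rcases hu.1 with h | h <;> rw [h] <;> simp)
    have n02 : π s(t, u) ≠ π s(t, s2) :=
      hπ.2 _ _ (edgeNe u s2 h2.2 hu2) ⟨t, by simp, by simp⟩
        (by rcases hu.1 with h | h <;> rw [h] <;> simp)
    have n12 : π s(t, s1) ≠ π s(t, s2) :=
      hπ.2 _ _ (edgeNe s1 s2 h2.2 h12) ⟨t, by simp, by simp⟩
        (by rcases h1.1 with h | h <;> rw [h] <;> simp)
    rcases hu.1 with h0 | h0 <;> rcases h1.1 with h1' | h1' <;> rcases h2.1 with h2' | h2' <;>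
      simp_all
  have hnoreach : ¬ chainReach σ a b x y := by
    intro hreach
    have hreach' : (chainGraph σ a b).Reachable x y := hreach
    obtain ⟨w0⟩ := hreach'
    have hpath : w0.toPath.1.reverse.IsPath := w0.toPath.2.reverse
    have hnnil : ¬ w0.toPath.1.reverse.Nil := Walk.not_nil_of_ne (Ne.symm hxyne)
    obtain ⟨u, hadj, q1, hq0eq⟩ := Walk.not_nil_iff.mp hnnil
    have hu : u = z := by
      rw [hHsAdj] at hadj
      by_cases hc1 : s(y, u) = s(y, z)
      · rcases Sym2.eq_iff.mp hc1 with ⟨_, h⟩ | ⟨h, _⟩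
        · exact h
        · exact absurd h hyzne
      · by_cases hc2 : s(y, u) = s(x, z)
        · rcases Sym2.eq_iff.mp hc2 with ⟨h, _⟩ | ⟨h, _⟩
          · exact absurd h (Ne.symm hxyne)
          · exact absurd h hyzne
        · rw [hσo _ hc1 hc2] at hadj
          rcases hadj.1 with h | h
          · exact absurd h (hya _ (by simp))
          · exact absurd h (hyb _ (by simp))
    have hu' : z = u := hu.symm
    clear hu
    subst hu'
    have hq1path : q1.IsPath ∧ y ∉ q1.support := by
      rw [hq0eq] at hpath
      exact (Walk.cons_isPath_iff _ _).mp hpath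
    -- transfer q1 to the deleted graph
    have hDmem : ∀ e, e ∈ q1.edges → e ∈ ((chainGraph π a b) \ fromEdgeSet {s(x, z)}).edgeSet := by
      intro e he
      have heS : e ∈ (chainGraph σ a b).edgeSet := q1.edges_subset_edgeSet he
      induction e with
      | h u' w' =>
        have hadj' : (chainGraph σ a b).Adj u' w' := heS
        have hneyz : s(u', w') ≠ s(y, z) := by
          intro hcon
          have hymem : y ∈ s(u', w') := by rw [hcon]; simp
          rcases Sym2.mem_iff.mp hymem with h | h
          · exact hq1path.2 (by rw [h]; exact Walk.fst_mem_support_of_mem_edges q1 he)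
          · exact hq1path.2 (by rw [h]; exact Walk.snd_mem_support_of_mem_edges q1 he)
        rw [hHsAdj] at hadj'
        have hnxz : s(u', w') ≠ s(x, z) := by
          intro hcon
          rw [hcon, hσxz] at hadj'
          rcases hadj'.1 with h | h
          · exact hac (Option.some.inj h).symm
          · exact hcb (Option.some.inj h)
        have hπval : π s(u', w') = σ s(u', w') := (hσo _ hneyz hnxz).symm
        rw [SimpleGraph.mem_edgeSet, SimpleGraph.sdiff_adj]
        constructor
        · rw [hHpAdj, hπval]; exact hadj'
        · rw [SimpleGraph.fromEdgeSet_adj]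
          exact fun hcon => hnxz (by simpa using hcon.1)
    have hreachD : ((chainGraph π a b) \ fromEdgeSet {s(x, z)}).Reachable x z :=
      (Walk.transfer q1 _ hDmem).reverse.reachable
    have hadjxz : (chainGraph π a b).Adj x z := by
      rw [hHpAdj]; exact ⟨Or.inl hπxz, hxzne⟩
    obtain ⟨u0, cyc, hcyc, hmem⟩ :=
      (SimpleGraph.adj_and_reachable_delete_edges_iff_exists_cycle).mp ⟨hadjxz, hreachD⟩
    have hxsup : x ∈ cyc.support := Walk.fst_mem_support_of_mem_edges cyc hmem
    have hclosure : ∀ (s t0 : V) (wk : (chainGraph π a b).Walk s t0),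
        s ∈ cyc.support → t0 ∈ cyc.support := by
      intro s t0 wk
      induction wk with
      | nil => exact id
      | cons hadj' wk' ih =>
        intro hs
        obtain ⟨s1, s2, h12, ha1, ha2, hm1, hm2⟩ := two_nbrs_of_cycle cyc hcyc hs
        rcases maxdeg _ _ _ _ hadj' ha1 ha2 h12 with rfl | rfl
        · exact ih hm1
        · exact ih hm2
    rw [inChainCycle] at hnotcycle
    push_neg at hnotcycle
    obtain ⟨v, hrv, hev⟩ := hnotcycle
    have hrv' : (chainGraph π a b).Reachable x v := hrv
    obtain ⟨wv⟩ := hrv'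
    have hvsup : v ∈ cyc.support := hclosure x v wv hxsup
    obtain ⟨s1, s2, h12, ha1, ha2, _, _⟩ := two_nbrs_of_cycle cyc hcyc hvsup
    exact h12 (hev ha1 ha2)
  exact ⟨hproper, hsets, hfxa, hfyb, fun hcon => hnoreach hcon.1⟩
end
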